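/- arXiv:2508.12058 — 3 statements merged into one kernel-verified Lean document; each statement's English description precedes it below -/
import Mathlib

section
/- Let ξ be an ℕ-valued random variable and (X_i)_{i≥1} a sequence of identically distributed nonnegative random variables with finite n-th moment, such that the whole sequence (X_i) is independent of ξ. Then E[(∑_{i=1}^ξ X_i)^n] ≤ E[ξ^n]·E[X_1^n]. -/
open MeasureTheory ProbabilityTheory
open scoped ENNReal NNReal

private lemma aux_pow_sum (k m : ℕ) (x : ℕ → ℝ≥0∞) :
    (∑ i ∈ Finset.range k, x i) ^ (m + 1)
      ≤ (k : ℝ≥0∞) ^ m * ∑ i ∈ Finset.range k, x i ^ (m + 1) := by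
  have h := ENNReal.rpow_sum_le_const_mul_sum_rpow (s := Finset.range k) (f := x)
    (p := (m + 1 : ℝ)) (by exact_mod_cast Nat.one_le_iff_ne_zero.2 (Nat.succ_ne_zero m))
  have h1 : ((m : ℝ) + 1) - 1 = (m : ℝ) := by ring
  simpa [← ENNReal.rpow_natCast, h1, Nat.cast_add, Nat.cast_one] using h

/-- **Basic moment lemma for random sums.** If `ξ` is an `ℕ`-valued random variable and
`(X_i)` is a sequence of identically distributed nonnegative random variables with finite
`n`-th moment, the whole sequence being independent of `ξ`, then
`E[(∑_{i=1}^ξ X_i)^n] ≤ E[ξ^n] * E[X_1^n]`. -/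
theorem random_sum_moment_bound {Ω : Type*} [MeasurableSpace Ω]
    (P : Measure Ω) [IsProbabilityMeasure P]
    (n : ℕ) (ξ : Ω → ℕ) (X : ℕ → Ω → ℝ≥0)
    (hξ : Measurable ξ) (hX : ∀ i, Measurable (X i))
    (hid : ∀ i, Measure.map (X i) P = Measure.map (X 0) P)
    (hindep : IndepFun (fun ω => fun i => X i ω) ξ P)
    (hmom : ∫⁻ ω, (X 0 ω : ℝ≥0∞) ^ n ∂P < ⊤) :
    ∫⁻ ω, (∑ i ∈ Finset.range (ξ ω), (X i ω : ℝ≥0∞)) ^ n ∂P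
      ≤ (∫⁻ ω, (ξ ω : ℝ≥0∞) ^ n ∂P) * ∫⁻ ω, (X 0 ω : ℝ≥0∞) ^ n ∂P := by
  cases n with
  | zero => simp
  | succ m =>
    set M := ∫⁻ ω, (X 0 ω : ℝ≥0∞) ^ (m + 1) ∂P with hM
    have hS : Measurable (fun ω => fun i => X i ω) := measurable_pi_lambda _ hX
    -- each X i has the same (m+1)-th moment
    have hmomi : ∀ i, ∫⁻ ω, (X i ω : ℝ≥0∞) ^ (m + 1) ∂P = M := by
      intro i
      have hg : Measurable fun x : ℝ≥0 => (x : ℝ≥0∞) ^ (m + 1) :=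
        (ENNReal.continuous_coe.measurable).pow_const _
      rw [hM, ← lintegral_map hg (hX i), ← lintegral_map hg (hX 0), hid i]
    -- measurable sets {ξ = k}
    have hsk : ∀ k, MeasurableSet {ω | ξ ω = k} := fun k =>
      hξ (measurableSet_singleton k)
    -- auxiliary functions of the sequence
    set φ : ℕ → (ℕ → ℝ≥0) → ℝ≥0∞ := fun k s =>
      (k : ℝ≥0∞) ^ m * ∑ i ∈ Finset.range k, (s i : ℝ≥0∞) ^ (m + 1) with hφ
    have hφm : ∀ k, Measurable (φ k) := by
      intro k
      apply Measurable.const_mul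
      exact Finset.measurable_sum _ fun i _ =>
        ((ENNReal.continuous_coe.measurable).comp (measurable_pi_apply i)).pow_const _
    set ψ : ℕ → ℕ → ℝ≥0∞ := fun k j => Set.indicator ({k} : Set ℕ) 1 j with hψ
    have hψm : ∀ k, Measurable (ψ k) := fun k => measurable_of_countable _
    -- key independence computation
    have key : ∀ k, ∫⁻ ω, φ k (fun i => X i ω) * ψ k (ξ ω) ∂P
        = ((k : ℝ≥0∞) ^ m * (k * M)) * P {ω | ξ ω = k} := by
      intro k
      have hind : IndepFun (fun ω => φ k (fun i => X i ω)) (fun ω => ψ k (ξ ω)) P :=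
        hindep.comp (hφm k) (hψm k)
      have heq := lintegral_mul_eq_lintegral_mul_lintegral_of_indepFun
        (f := fun ω => φ k fun i => X i ω) (g := fun ω => ψ k (ξ ω))
        ((hφm k).comp hS) ((hψm k).comp hξ) hind
      simp only [Pi.mul_apply] at heq
      rw [heq]
      congr 1
      · rw [hφ]
        simp only
        have hms : ∀ i : ℕ, Measurable fun ω => ((X i ω : ℝ≥0∞)) ^ (m + 1) :=
          fun i => ((hX i).coe_nnreal_ennreal).pow_const _
        rw [lintegral_const_mul _ (Finset.measurable_sum _ fun i _ => hms i)]
        rw [lintegral_finset_sum _ fun i _ => hms i]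
        simp only [hmomi]
        rw [Finset.sum_const, Finset.card_range, nsmul_eq_mul]
      · have : (fun ω => ψ k (ξ ω)) = Set.indicator {ω | ξ ω = k} 1 := by
          funext ω
          by_cases h : ξ ω = k <;> simp [hψ, Set.indicator, h]
        rw [this, lintegral_indicator_one (hsk k)]
    -- pointwise decomposition into a tsum
    have hdecomp : ∀ (g : ℕ → Ω → ℝ≥0∞) (ω : Ω),
        g (ξ ω) ω = ∑' k, Set.indicator {ω' | ξ ω' = k} (g k) ω := by
      intro g ω
      rw [tsum_eq_single (ξ ω)]
      · simp [Set.indicator]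
      · intro k hk
        exact Set.indicator_of_notMem (s := {ω' | ξ ω' = k})
          (fun h => hk (Eq.symm h)) _
    calc ∫⁻ ω, (∑ i ∈ Finset.range (ξ ω), (X i ω : ℝ≥0∞)) ^ (m + 1) ∂P
        ≤ ∫⁻ ω, φ (ξ ω) (fun i => X i ω) ∂P := by
          apply lintegral_mono
          intro ω
          exact aux_pow_sum (ξ ω) m fun i => (X i ω : ℝ≥0∞)
      _ = ∑' k : ℕ, ∫⁻ ω, Set.indicator {ω' | ξ ω' = k}
            (fun ω => φ k (fun i => X i ω)) ω ∂P := by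
          have ht := lintegral_tsum (μ := P)
            (f := fun k => Set.indicator {ω' | ξ ω' = k} (fun ω => φ k fun i => X i ω))
            (fun k => (Measurable.indicator ((hφm k).comp hS) (hsk k)).aemeasurable)
          rw [← ht]
          exact lintegral_congr fun ω => hdecomp (fun k ω => φ k (fun i => X i ω)) ω
      _ = ∑' k : ℕ, ((k : ℝ≥0∞) ^ m * (k * M)) * P {ω | ξ ω = k} := by
          refine tsum_congr fun k => ?_
          rw [← key k]
          refine lintegral_congr fun ω => ?_
          by_cases h : ξ ω = k <;> simp [Set.indicator, h, hψ]
      _ = (∑' k : ℕ, (k : ℝ≥0∞) ^ (m + 1) * P {ω | ξ ω = k}) * M := by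
          rw [← ENNReal.tsum_mul_right]
          refine tsum_congr fun k => ?_
          ring
      _ = (∫⁻ ω, (ξ ω : ℝ≥0∞) ^ (m + 1) ∂P) * M := by
          congr 1
          have : ∫⁻ ω, (ξ ω : ℝ≥0∞) ^ (m + 1) ∂P
              = ∫⁻ k, (k : ℝ≥0∞) ^ (m + 1) ∂(P.map ξ) := by
            rw [lintegral_map (by measurability) hξ]
          rw [this, lintegral_countable']
          refine tsum_congr fun k => ?_
          rw [Measure.map_apply hξ (measurableSet_singleton k)]
          rfl
end

section
/- Let Q be a Poisson random measure on (E, 𝓔) with mean measure μ and f ∈ L¹(μ). Then the characteristic function of the compensated integral satisfies E[exp(i·Q̄(f))] = exp(μ(e^{if} − i f − 1)). -/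
open MeasureTheory ProbabilityTheory
open scoped ENNReal

/-- `Q` is a Poisson random measure on `E` with mean measure `μ`, defined on the probability
space `(Ω, P)` : for every measurable set `A` of finite mean measure, `ω ↦ Q ω A` is a
Poisson random variable with mean `μ A`, and the masses of pairwise disjoint measurable sets
are independent. -/
def IsPoissonRandomMeasure {Ω E : Type*} [MeasurableSpace Ω] [MeasurableSpace E]
    (P : Measure Ω) (Q : Ω → Measure E) (μ : Measure E) : Prop :=
  (∀ A : Set E, MeasurableSet A → μ A < ⊤ →
      Measurable (fun ω => Q ω A) ∧
      ∀ k : ℕ, P {ω | Q ω A = k} =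
        ENNReal.ofReal (Real.exp (-(μ A).toReal) * (μ A).toReal ^ k / (Nat.factorial k))) ∧
  ∀ (n : ℕ) (A : Fin n → Set E), (∀ i, MeasurableSet (A i)) →
    (Pairwise fun i j => Disjoint (A i) (A j)) →
    iIndepFun (fun i ω => Q ω (A i)) P

/-- The compensated integral `Q̄(f) = ∫ f dQ − ∫ f dμ` of `f` against the compensated
Poisson random measure `Q̄ = Q − μ`. -/
noncomputable def compensatedIntegral {Ω E : Type*} [MeasurableSpace Ω] [MeasurableSpace E]
    (Q : Ω → Measure E) (μ : Measure E) (f : E → ℝ) (ω : Ω) : ℝ :=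
  (∫ x, f x ∂(Q ω)) - ∫ x, f x ∂μ

namespace PoissonAux

open Filter Real
open scoped NNReal Topology


lemma norm_exp_I_mul (x : ℝ) : ‖Complex.exp (Complex.I * x)‖ = 1 := by
  rw [Complex.norm_exp]
  simp

lemma norm_exp_I_mul_sub_one (x : ℝ) : ‖Complex.exp (Complex.I * x) - 1‖ ≤ |x| := by
  have h : Complex.exp (Complex.I * x) - 1
      = Complex.ofReal (Real.cos x - 1) + Complex.ofReal (Real.sin x) * Complex.I := by
    rw [mul_comm, Complex.exp_mul_I]
    push_cast
    ring
  have habs : ‖Complex.exp (Complex.I * x) - 1‖ = Real.sqrt ((Real.cos x - 1)^2 + (Real.sin x)^2) := by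
    rw [h, Complex.norm_add_mul_I]
  rw [habs]
  have h1 : (Real.cos x - 1)^2 + (Real.sin x)^2 ≤ x^2 := by
    have hc := Real.one_sub_sq_div_two_le_cos (x := x)
    have hs := Real.sin_sq_add_cos_sq x
    nlinarith [Real.cos_le_one x]
  calc Real.sqrt ((Real.cos x - 1)^2 + (Real.sin x)^2) ≤ Real.sqrt (x^2) :=
        Real.sqrt_le_sqrt h1
    _ = |x| := Real.sqrt_sq_eq_abs x

lemma norm_exp_I_mul_sub_exp_I_mul (a b : ℝ) :
    ‖Complex.exp (Complex.I * a) - Complex.exp (Complex.I * b)‖ ≤ |a - b| := by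
  have h : Complex.exp (Complex.I * a) - Complex.exp (Complex.I * b)
      = Complex.exp (Complex.I * b) * (Complex.exp (Complex.I * ((a - b : ℝ))) - 1) := by
    rw [mul_sub, ← Complex.exp_add, mul_one]
    push_cast
    ring_nf
  rw [h, norm_mul, norm_exp_I_mul, one_mul]
  exact norm_exp_I_mul_sub_one _

lemma norm_phi (a : ℝ) :
    ‖Complex.exp (Complex.I * a) - Complex.I * a - 1‖ ≤ 2 * |a| := by
  have h1 := norm_exp_I_mul_sub_one a
  have hrw : Complex.exp (Complex.I * a) - Complex.I * a - 1
      = (Complex.exp (Complex.I * a) - 1) - Complex.I * a := by ring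
  rw [hrw]
  calc ‖(Complex.exp (Complex.I * a) - 1) - Complex.I * a‖
      ≤ ‖Complex.exp (Complex.I * a) - 1‖ + ‖Complex.I * a‖ := norm_sub_le _ _
    _ ≤ |a| + |a| := by
        refine add_le_add h1 ?_
        rw [norm_mul, Complex.norm_I, one_mul, Complex.norm_real,
          Real.norm_eq_abs]
    _ = 2 * |a| := by ring

lemma norm_phi_sub_phi (a b : ℝ) :
    ‖(Complex.exp (Complex.I * a) - Complex.I * a - 1)
      - (Complex.exp (Complex.I * b) - Complex.I * b - 1)‖ ≤ 2 * |a - b| := by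
  have h : (Complex.exp (Complex.I * a) - Complex.I * a - 1)
      - (Complex.exp (Complex.I * b) - Complex.I * b - 1)
      = (Complex.exp (Complex.I * a) - Complex.exp (Complex.I * b))
        - Complex.I * ((a - b : ℝ)) := by push_cast; ring
  rw [h]
  calc ‖(Complex.exp (Complex.I * a) - Complex.exp (Complex.I * b)) - Complex.I * ((a - b : ℝ))‖
      ≤ ‖Complex.exp (Complex.I * a) - Complex.exp (Complex.I * b)‖ + ‖Complex.I * ((a - b : ℝ))‖ :=
        norm_sub_le _ _
    _ ≤ |a - b| + |a - b| := by
        refine add_le_add (norm_exp_I_mul_sub_exp_I_mul a b) ?_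
        rw [norm_mul, Complex.norm_I, one_mul, Complex.norm_real,
          Real.norm_eq_abs]
    _ = 2 * |a - b| := by ring

/-- Poisson pmf real values. -/
noncomputable def pmf (lam : ℝ) (k : ℕ) : ℝ := Real.exp (-lam) * lam ^ k / (Nat.factorial k)

lemma pmf_nonneg {lam : ℝ} (h : 0 ≤ lam) (k : ℕ) : 0 ≤ pmf lam k := by
  unfold pmf
  positivity

lemma hasSum_pmf {lam : ℝ} (h : 0 ≤ lam) : HasSum (pmf lam) 1 := by
  have heq : poissonPMFReal lam.toNNReal = pmf lam := by
    funext k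
    unfold poissonPMFReal pmf
    rw [Real.coe_toNNReal lam h]
  have : HasSum (poissonPMFReal lam.toNNReal) 1 := poissonPMFRealSum lam.toNNReal
  rwa [heq] at this

lemma hasSum_mean {lam : ℝ} (h : 0 ≤ lam) : HasSum (fun k : ℕ => (k : ℝ) * pmf lam k) lam := by
  have h1 : HasSum (fun k : ℕ => ((k+1 : ℕ) : ℝ) * pmf lam (k+1)) lam := by
    have h2 : (fun k : ℕ => ((k+1 : ℕ) : ℝ) * pmf lam (k+1)) = fun k : ℕ => lam * pmf lam k := by
      funext k
      unfold pmf
      rw [Nat.factorial_succ]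
      push_cast
      field_simp
      ring
    rw [h2]
    simpa using (hasSum_pmf h).mul_left lam
  have := (hasSum_nat_add_iff' (f := fun k : ℕ => (k:ℝ) * pmf lam k) 1).1 (by simpa using h1)
  simpa using this

lemma tsum_pmf_ennreal {lam : ℝ} (h : 0 ≤ lam) :
    ∑' k : ℕ, ENNReal.ofReal (pmf lam k) = 1 := by
  rw [← ENNReal.ofReal_tsum_of_nonneg (pmf_nonneg h) (hasSum_pmf h).summable,
    (hasSum_pmf h).tsum_eq, ENNReal.ofReal_one]

lemma tsum_mean_ennreal {lam : ℝ} (h : 0 ≤ lam) :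
    ∑' k : ℕ, (k : ℝ≥0∞) * ENNReal.ofReal (pmf lam k) = ENNReal.ofReal lam := by
  have h1 : ∀ k : ℕ, (k : ℝ≥0∞) * ENNReal.ofReal (pmf lam k)
      = ENNReal.ofReal ((k : ℝ) * pmf lam k) := by
    intro k
    rw [ENNReal.ofReal_mul (by positivity), ENNReal.ofReal_natCast]
  simp_rw [h1]
  rw [← ENNReal.ofReal_tsum_of_nonneg (fun k => mul_nonneg (Nat.cast_nonneg k) (pmf_nonneg h k)) (hasSum_mean h).summable,
    (hasSum_mean h).tsum_eq]

lemma tsum_char {lam : ℝ} (h : 0 ≤ lam) (c : ℝ) :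
    ∑' k : ℕ, Complex.exp (Complex.I * ((k : ℝ) * c)) * (pmf lam k : ℂ)
      = Complex.exp (lam * (Complex.exp (Complex.I * c) - 1)) := by
  have key : ∀ k : ℕ, Complex.exp (Complex.I * ((k : ℝ) * c)) * (pmf lam k : ℂ)
      = Complex.exp (-lam) * ((lam * Complex.exp (Complex.I * c))^k / (Nat.factorial k)) := by
    intro k
    have : Complex.exp (Complex.I * ((k : ℝ) * c)) = Complex.exp (Complex.I * c) ^ k := by
      rw [← Complex.exp_nat_mul]
      push_cast
      ring_nf
    rw [this]
    unfold pmf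
    push_cast [Complex.ofReal_exp]
    rw [mul_pow]
    ring
  simp_rw [key]
  rw [tsum_mul_left]
  have : ∑' k : ℕ, (lam * Complex.exp (Complex.I * c))^k / (Nat.factorial k)
      = Complex.exp (lam * Complex.exp (Complex.I * c)) := by
    rw [Complex.exp_eq_exp_ℂ, NormedSpace.exp_eq_tsum_div]
  rw [this, ← Complex.exp_add]
  congr 1
  push_cast
  ring


section Infra

variable {Ω E : Type*} [MeasurableSpace Ω] [MeasurableSpace E]
variable {P : Measure Ω} {Q : Ω → Measure E} {μ : Measure E}

lemma pmf_eq (A : Set E) (μ : Measure E) (k : ℕ) :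
    ENNReal.ofReal (Real.exp (-(μ A).toReal) * (μ A).toReal ^ k / (Nat.factorial k))
      = ENNReal.ofReal (pmf (μ A).toReal k) := rfl

lemma measurable_measure_apply [SigmaFinite μ] (hQ : IsPoissonRandomMeasure P Q μ) {A : Set E}
    (hA : MeasurableSet A) : Measurable fun ω => Q ω A := by
  have hmono : Monotone fun n => A ∩ spanningSets μ n := fun i j h =>
    Set.inter_subset_inter_right A (monotone_spanningSets μ h)
  have hrw : (fun ω => Q ω A) = fun ω => ⨆ n, Q ω (A ∩ spanningSets μ n) := by
    funext ω
    conv_lhs => rw [show A = ⋃ n, A ∩ spanningSets μ n by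
      rw [← Set.inter_iUnion, iUnion_spanningSets, Set.inter_univ]]
    exact Directed.measure_iUnion (hmono.directed_le)
  rw [hrw]
  exact Measurable.iSup fun n => (hQ.1 _ (hA.inter (measurableSet_spanningSets μ n))
    (lt_of_le_of_lt (measure_mono Set.inter_subset_right) (measure_spanningSets_lt_top μ n))).1

lemma measurable_Q [SigmaFinite μ] (hQ : IsPoissonRandomMeasure P Q μ) : Measurable (fun ω => Q ω) :=
  Measure.measurable_of_measurable_coe _ fun _ hA => measurable_measure_apply hQ hA

/-- mean of the Poisson mass of a finite-measure set. -/
lemma lintegral_measure_apply_of_lt_top [IsProbabilityMeasure P] (hQ : IsPoissonRandomMeasure P Q μ)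
    {A : Set E} (hA : MeasurableSet A) (hμA : μ A < ⊤) :
    ∫⁻ ω, Q ω A ∂P = μ A := by
  obtain ⟨hmeas, hpmf⟩ := hQ.1 A hA hμA
  set lam := (μ A).toReal with hlam
  have hlam0 : 0 ≤ lam := ENNReal.toReal_nonneg
  set S : ℕ → Set Ω := fun k => (fun ω => Q ω A) ⁻¹' {(k : ℝ≥0∞)} with hS
  have hSm : ∀ k, MeasurableSet (S k) := fun k => hmeas (measurableSet_singleton _)
  have hSd : Pairwise (Function.onFun Disjoint S) := by
    intro i j hij
    rw [Function.onFun, Set.disjoint_left]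
    rintro ω h1 h2
    exact hij (Nat.cast_injective ((Set.mem_preimage.1 h1).symm.trans (Set.mem_preimage.1 h2)))
  have hPS : ∀ k, P (S k) = ENNReal.ofReal (pmf lam k) := fun k => hpmf k
  have hUm : MeasurableSet (⋃ k, S k) := MeasurableSet.iUnion hSm
  have hU : P (⋃ k, S k) = 1 := by
    rw [measure_iUnion hSd hSm]
    simp_rw [hPS]
    exact tsum_pmf_ennreal hlam0
  have hUc : P (⋃ k, S k)ᶜ = 0 := by
    rw [measure_compl hUm (measure_ne_top P _), hU, measure_univ, tsub_self]
  calc ∫⁻ ω, Q ω A ∂P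
      = ∫⁻ ω in ⋃ k, S k, Q ω A ∂P + ∫⁻ ω in (⋃ k, S k)ᶜ, Q ω A ∂P :=
        (lintegral_add_compl _ hUm).symm
    _ = ∑' k, ∫⁻ ω in S k, Q ω A ∂P := by
        rw [setLIntegral_measure_zero _ _ hUc, add_zero, lintegral_iUnion hSm hSd]
    _ = ∑' k : ℕ, (k : ℝ≥0∞) * ENNReal.ofReal (pmf lam k) := by
        congr 1
        funext k
        rw [setLIntegral_congr_fun (hSm k) (fun ω hω => hω),
          setLIntegral_const, hPS k]
    _ = ENNReal.ofReal lam := tsum_mean_ennreal hlam0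
    _ = μ A := by rw [hlam, ENNReal.ofReal_toReal hμA.ne]

lemma lintegral_measure_apply [IsProbabilityMeasure P] [SigmaFinite μ] (hQ : IsPoissonRandomMeasure P Q μ)
    {A : Set E} (hA : MeasurableSet A) :
    ∫⁻ ω, Q ω A ∂P = μ A := by
  have hmono : Monotone fun n => A ∩ spanningSets μ n := fun i j h =>
    Set.inter_subset_inter_right A (monotone_spanningSets μ h)
  have hAeq : A = ⋃ n, A ∩ spanningSets μ n := by
    rw [← Set.inter_iUnion, iUnion_spanningSets, Set.inter_univ]
  have hfin : ∀ n, μ (A ∩ spanningSets μ n) < ⊤ := fun n =>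
    lt_of_le_of_lt (measure_mono Set.inter_subset_right) (measure_spanningSets_lt_top μ n)
  have hmeasn : ∀ n, MeasurableSet (A ∩ spanningSets μ n) := fun n =>
    hA.inter (measurableSet_spanningSets μ n)
  calc ∫⁻ ω, Q ω A ∂P
      = ∫⁻ ω, ⨆ n, Q ω (A ∩ spanningSets μ n) ∂P := by
        congr 1
        funext ω
        conv_lhs => rw [hAeq]
        exact Directed.measure_iUnion (hmono.directed_le)
    _ = ⨆ n, ∫⁻ ω, Q ω (A ∩ spanningSets μ n) ∂P := by
        refine lintegral_iSup (fun n => (hQ.1 _ (hmeasn n) (hfin n)).1) ?_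
        intro i j hij ω
        exact measure_mono (Set.inter_subset_inter_right A (monotone_spanningSets μ hij))
    _ = ⨆ n, μ (A ∩ spanningSets μ n) := by
        congr 1
        funext n
        exact lintegral_measure_apply_of_lt_top hQ (hmeasn n) (hfin n)
    _ = μ A := by
        conv_rhs => rw [hAeq]
        exact (Directed.measure_iUnion (hmono.directed_le)).symm

lemma bind_eq [IsProbabilityMeasure P] [SigmaFinite μ] (hQ : IsPoissonRandomMeasure P Q μ) :
    P.bind Q = μ := by
  ext A hA
  rw [Measure.bind_apply hA (measurable_Q hQ).aemeasurable]
  exact lintegral_measure_apply hQ hA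

/-- Campbell's formula. -/
lemma campbell [IsProbabilityMeasure P] [SigmaFinite μ] (hQ : IsPoissonRandomMeasure P Q μ)
    {g : E → ℝ≥0∞} (hg : Measurable g) :
    ∫⁻ ω, ∫⁻ x, g x ∂(Q ω) ∂P = ∫⁻ x, g x ∂μ := by
  rw [← Measure.lintegral_bind (measurable_Q hQ).aemeasurable hg.aemeasurable, bind_eq hQ]

lemma measurable_lintegral_Q [SigmaFinite μ] (hQ : IsPoissonRandomMeasure P Q μ) {g : E → ℝ≥0∞}
    (hg : Measurable g) : Measurable fun ω => ∫⁻ x, g x ∂(Q ω) :=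
  (Measure.measurable_lintegral hg).comp (measurable_Q hQ)

end Infra

section Char
variable {Ω E : Type*} [MeasurableSpace Ω] [MeasurableSpace E]
variable {P : Measure Ω} {Q : Ω → Measure E} {μ : Measure E}

lemma ae_lt_top_measure_apply [IsProbabilityMeasure P] (hQ : IsPoissonRandomMeasure P Q μ) {A : Set E}
    (hA : MeasurableSet A) (hμA : μ A < ⊤) : ∀ᵐ ω ∂P, Q ω A < ⊤ :=
  ae_lt_top (hQ.1 A hA hμA).1
    (by rw [lintegral_measure_apply_of_lt_top hQ hA hμA]; exact hμA.ne)

lemma integral_comp_measure_apply [IsProbabilityMeasure P] (hQ : IsPoissonRandomMeasure P Q μ) {A : Set E}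
    (hA : MeasurableSet A) (hμA : μ A < ⊤) {F : ℝ≥0∞ → ℂ} (hF : Measurable F)
    (hb : ∀ x, ‖F x‖ ≤ 1) :
    ∫ ω, F (Q ω A) ∂P = ∑' k : ℕ, F k * (pmf (μ A).toReal k : ℂ) := by
  obtain ⟨hmeas, hpmf⟩ := hQ.1 A hA hμA
  set lam := (μ A).toReal with hlam
  have hlam0 : 0 ≤ lam := ENNReal.toReal_nonneg
  set S : ℕ → Set Ω := fun k => (fun ω => Q ω A) ⁻¹' {(k : ℝ≥0∞)} with hS
  have hSm : ∀ k, MeasurableSet (S k) := fun k => hmeas (measurableSet_singleton _)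
  have hSd : Pairwise (Function.onFun Disjoint S) := by
    intro i j hij
    rw [Function.onFun, Set.disjoint_left]
    rintro ω h1 h2
    exact hij (Nat.cast_injective ((Set.mem_preimage.1 h1).symm.trans (Set.mem_preimage.1 h2)))
  have hPS : ∀ k, P (S k) = ENNReal.ofReal (pmf lam k) := fun k => hpmf k
  have hUm : MeasurableSet (⋃ k, S k) := MeasurableSet.iUnion hSm
  have hU : P (⋃ k, S k) = 1 := by
    rw [measure_iUnion hSd hSm]
    simp_rw [hPS]
    exact tsum_pmf_ennreal hlam0
  have hUc : P (⋃ k, S k)ᶜ = 0 := by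
    rw [measure_compl hUm (measure_ne_top P _), hU, measure_univ, tsub_self]
  have hint : Integrable (fun ω => F (Q ω A)) P :=
    Integrable.mono' (integrable_const 1) (hF.comp hmeas).aestronglyMeasurable
      (Filter.Eventually.of_forall fun ω => hb _)
  have key : ∫ ω, F (Q ω A) ∂P = ∫ ω in ⋃ k, S k, F (Q ω A) ∂P := by
    rw [← integral_add_compl hUm hint,
      show ∫ ω in (⋃ k, S k)ᶜ, F (Q ω A) ∂P = 0 from by
        rw [Measure.restrict_eq_zero.2 hUc, integral_zero_measure], add_zero]
  rw [key, integral_iUnion hSm hSd hint.integrableOn]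
  congr 1
  funext k
  rw [setIntegral_congr_fun (hSm k) (fun ω hω => by rw [show Q ω A = (k : ℝ≥0∞) from hω]),
    setIntegral_const, measureReal_def, hPS k, ENNReal.toReal_ofReal (pmf_nonneg hlam0 k), Complex.real_smul,
    mul_comm]

set_option maxHeartbeats 1000000 in
lemma char_single [IsProbabilityMeasure P] (hQ : IsPoissonRandomMeasure P Q μ) {A : Set E}
    (hA : MeasurableSet A) (hμA : μ A < ⊤) (c : ℝ) :
    ∫ ω, Complex.exp (Complex.I * ((c * (Q ω A).toReal : ℝ) : ℂ)
        - Complex.I * ((c * (μ A).toReal : ℝ) : ℂ)) ∂P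
      = Complex.exp (((μ A).toReal : ℂ)
          * (Complex.exp (Complex.I * (c : ℂ)) - Complex.I * (c : ℂ) - 1)) := by
  have hlam0 : (0:ℝ) ≤ (μ A).toReal := ENNReal.toReal_nonneg
  have hFm : Measurable (fun x : ℝ≥0∞ => Complex.exp (Complex.I * ((c * x.toReal : ℝ) : ℂ)
      - Complex.I * ((c * (μ A).toReal : ℝ) : ℂ))) := by
    apply Complex.measurable_exp.comp
    exact ((Complex.measurable_ofReal.comp
      (ENNReal.measurable_toReal.const_mul c)).const_mul Complex.I).sub measurable_const
  have hFb : ∀ x : ℝ≥0∞, ‖Complex.exp (Complex.I * ((c * x.toReal : ℝ) : ℂ)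
      - Complex.I * ((c * (μ A).toReal : ℝ) : ℂ))‖ ≤ 1 := by
    intro x
    apply le_of_eq
    simp only [Complex.norm_exp, Complex.sub_re, Complex.mul_re,
      Complex.I_re, Complex.I_im, Complex.ofReal_re, Complex.ofReal_im]
    norm_num
  have h1 := integral_comp_measure_apply hQ hA hμA hFm hFb
  rw [h1]
  have hterm : ∀ k : ℕ, Complex.exp (Complex.I * ((c * ((k : ℝ≥0∞)).toReal : ℝ) : ℂ)
        - Complex.I * ((c * (μ A).toReal : ℝ) : ℂ)) * ((pmf (μ A).toReal k : ℝ) : ℂ)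
      = Complex.exp (Complex.I * (((k:ℝ):ℂ) * (c:ℂ))) * ((pmf (μ A).toReal k : ℝ) : ℂ)
        * Complex.exp (-(Complex.I * ((c * (μ A).toReal : ℝ) : ℂ))) := by
    intro k
    rw [show Complex.exp (Complex.I * ((c * ((k : ℝ≥0∞)).toReal : ℝ) : ℂ)
        - Complex.I * ((c * (μ A).toReal : ℝ) : ℂ))
      = Complex.exp (Complex.I * (((k:ℝ):ℂ) * (c:ℂ)))
        * Complex.exp (-(Complex.I * ((c * (μ A).toReal : ℝ) : ℂ))) from by
      rw [← Complex.exp_add]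
      congr 1
      rw [ENNReal.toReal_natCast]
      push_cast
      ring]
    ring
  rw [tsum_congr hterm, tsum_mul_right, tsum_char hlam0 c, ← Complex.exp_add]
  congr 1
  push_cast
  ring

/-- product of independent, uniformly bounded complex random variables. -/
lemma indep_integral_mul [IsProbabilityMeasure P] {X Y : Ω → ℂ}
    (h : IndepFun X Y P) (hXm : Measurable X) (hYm : Measurable Y)
    (hX : Integrable X P) (hY : Integrable Y P) (hXY : Integrable (fun ω => X ω * Y ω) P) :
    ∫ ω, X ω * Y ω ∂P = (∫ ω, X ω ∂P) * ∫ ω, Y ω ∂P := by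
  have hre : Measurable fun z : ℂ => z.re := Complex.measurable_re
  have him : Measurable fun z : ℂ => z.im := Complex.measurable_im
  have h11 : IndepFun (fun ω => (X ω).re) (fun ω => (Y ω).re) P := h.comp hre hre
  have h12 : IndepFun (fun ω => (X ω).re) (fun ω => (Y ω).im) P := h.comp hre him
  have h21 : IndepFun (fun ω => (X ω).im) (fun ω => (Y ω).re) P := h.comp him hre
  have h22 : IndepFun (fun ω => (X ω).im) (fun ω => (Y ω).im) P := h.comp him him
  have iXr : Integrable (fun ω => (X ω).re) P := hX.re
  have iXi : Integrable (fun ω => (X ω).im) P := hX.im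
  have iYr : Integrable (fun ω => (Y ω).re) P := hY.re
  have iYi : Integrable (fun ω => (Y ω).im) P := hY.im
  have e11 : ∫ ω, (X ω).re * (Y ω).re ∂P = (∫ ω, (X ω).re ∂P) * ∫ ω, (Y ω).re ∂P :=
    h11.integral_fun_mul_eq_mul_integral iXr.1 iYr.1
  have e12 : ∫ ω, (X ω).re * (Y ω).im ∂P = (∫ ω, (X ω).re ∂P) * ∫ ω, (Y ω).im ∂P :=
    h12.integral_fun_mul_eq_mul_integral iXr.1 iYi.1
  have e21 : ∫ ω, (X ω).im * (Y ω).re ∂P = (∫ ω, (X ω).im ∂P) * ∫ ω, (Y ω).re ∂P :=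
    h21.integral_fun_mul_eq_mul_integral iXi.1 iYr.1
  have e22 : ∫ ω, (X ω).im * (Y ω).im ∂P = (∫ ω, (X ω).im ∂P) * ∫ ω, (Y ω).im ∂P :=
    h22.integral_fun_mul_eq_mul_integral iXi.1 iYi.1
  have i11 : Integrable (fun ω => (X ω).re * (Y ω).re) P := h11.integrable_mul iXr iYr
  have i12 : Integrable (fun ω => (X ω).re * (Y ω).im) P := h12.integrable_mul iXr iYi
  have i21 : Integrable (fun ω => (X ω).im * (Y ω).re) P := h21.integrable_mul iXi iYr
  have i22 : Integrable (fun ω => (X ω).im * (Y ω).im) P := h22.integrable_mul iXi iYi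
  have hre_int : ∀ {g : Ω → ℂ}, Integrable g P → ∫ ω, (g ω).re ∂P = (∫ ω, g ω ∂P).re := by
    intro g hg
    simpa using Complex.reCLM.integral_comp_comm hg
  have him_int : ∀ {g : Ω → ℂ}, Integrable g P → ∫ ω, (g ω).im ∂P = (∫ ω, g ω ∂P).im := by
    intro g hg
    simpa using Complex.imCLM.integral_comp_comm hg
  apply Complex.ext
  · rw [← hre_int hXY, Complex.mul_re, ← hre_int hX, ← hre_int hY,
      ← him_int hX, ← him_int hY]
    have : (fun ω => (X ω * Y ω).re)
        = fun ω => (X ω).re * (Y ω).re - (X ω).im * (Y ω).im := by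
      funext ω; rw [Complex.mul_re]
    rw [this, integral_sub i11 i22, e11, e22]
  · rw [← him_int hXY, Complex.mul_im, ← hre_int hX, ← hre_int hY,
      ← him_int hX, ← him_int hY]
    have : (fun ω => (X ω * Y ω).im)
        = fun ω => (X ω).re * (Y ω).im + (X ω).im * (Y ω).re := by
      funext ω; rw [Complex.mul_im]
    rw [this, integral_add i12 i21, e12, e21]

/-- expectation of a product of independent uniformly-bounded complex random variables. -/
lemma indep_integral_prod [IsProbabilityMeasure P] {n : ℕ} {Y : Fin n → Ω → ℂ}
    (h : iIndepFun Y P) (hm : ∀ i, Measurable (Y i))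
    (hb : ∀ i ω, ‖Y i ω‖ ≤ 1) (s : Finset (Fin n)) :
    ∫ ω, ∏ i ∈ s, Y i ω ∂P = ∏ i ∈ s, ∫ ω, Y i ω ∂P := by
  classical
  induction s using Finset.induction_on with
  | empty => simp
  | @insert j t hj ih =>
    have hpe : (∏ i ∈ t, Y i) = fun ω => ∏ i ∈ t, Y i ω := by
      funext ω
      simp
    have hprodm : Measurable fun ω => ∏ i ∈ t, Y i ω :=
      Finset.measurable_prod t fun i _ => hm i
    have hprodb : ∀ ω, ‖∏ i ∈ t, Y i ω‖ ≤ 1 := by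
      intro ω
      calc ‖∏ i ∈ t, Y i ω‖ = ∏ i ∈ t, ‖Y i ω‖ := norm_prod _ _
        _ ≤ ∏ i ∈ t, 1 := Finset.prod_le_prod (fun i _ => norm_nonneg _) (fun i _ => hb i ω)
        _ = 1 := Finset.prod_const_one
    have hint : ∀ (Z : Ω → ℂ), Measurable Z → (∀ ω, ‖Z ω‖ ≤ 1) → Integrable Z P := fun Z hZ hZb =>
      Integrable.mono' (integrable_const 1) hZ.aestronglyMeasurable
        (Filter.Eventually.of_forall hZb)
    have hindep0 : IndepFun (∏ i ∈ t, Y i) (Y j) P := h.indepFun_finset_prod_of_notMem hm hj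
    have hindep : IndepFun (fun ω => ∏ i ∈ t, Y i ω) (Y j) P := hpe ▸ hindep0
    have hmul : ∀ ω, ∏ i ∈ insert j t, Y i ω = (∏ i ∈ t, Y i ω) * Y j ω := by
      intro ω
      rw [Finset.prod_insert hj]
      ring
    simp_rw [hmul]
    rw [indep_integral_mul hindep hprodm (hm j) (hint _ hprodm hprodb) (hint _ (hm j) (hb j))
        (hint _ (hprodm.mul (hm j)) fun ω => by
          rw [norm_mul]
          exact mul_le_one₀ (hprodb ω) (norm_nonneg _) (hb j ω)),
      ih, Finset.prod_insert hj, mul_comm]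

end Char

section Simple
variable {Ω E : Type*} [MeasurableSpace Ω] [MeasurableSpace E]
variable {P : Measure Ω} {Q : Ω → Measure E} {μ : Measure E}

lemma indicator_comp {n : ℕ} (A : Fin n → Set E) (hd : Pairwise fun i j => Disjoint (A i) (A j))
    (c : Fin n → ℝ) (φ : ℝ → ℂ) (hφ : φ 0 = 0) (x : E) :
    φ (∑ i, (A i).indicator (fun _ => c i) x) = ∑ i, (A i).indicator (fun _ => φ (c i)) x := by
  by_cases hx : ∃ i, x ∈ A i
  · obtain ⟨i, hi⟩ := hx
    have hsum : ∑ j, (A j).indicator (fun _ => c j) x = c i := by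
      rw [Finset.sum_eq_single i]
      · exact Set.indicator_of_mem hi _
      · exact fun j _ hj =>
          Set.indicator_of_notMem (fun hxj => absurd hi (Set.disjoint_left.1 (hd hj) hxj)) _
      · exact fun h => absurd (Finset.mem_univ i) h
    have hsum2 : ∑ j, (A j).indicator (fun _ => φ (c j)) x = φ (c i) := by
      rw [Finset.sum_eq_single i]
      · exact Set.indicator_of_mem hi _
      · exact fun j _ hj =>
          Set.indicator_of_notMem (fun hxj => absurd hi (Set.disjoint_left.1 (hd hj) hxj)) _
      · exact fun h => absurd (Finset.mem_univ i) h
    rw [hsum, hsum2]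
  · push_neg at hx
    rw [Finset.sum_eq_zero fun j _ => Set.indicator_of_notMem (hx j) _,
      Finset.sum_eq_zero fun j _ => Set.indicator_of_notMem (hx j) _, hφ]

set_option maxHeartbeats 1000000 in
lemma char_simple [IsProbabilityMeasure P] [SigmaFinite μ] (hQ : IsPoissonRandomMeasure P Q μ) {n : ℕ}
    {A : Fin n → Set E} (hA : ∀ i, MeasurableSet (A i))
    (hd : Pairwise fun i j => Disjoint (A i) (A j)) (hfin : ∀ i, μ (A i) < ⊤) (c : Fin n → ℝ) :
    ∫ ω, Complex.exp (Complex.I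
        * ((compensatedIntegral Q μ (fun x => ∑ i, (A i).indicator (fun _ => c i) x) ω : ℝ) : ℂ)) ∂P
      = Complex.exp (∫ x,
          (Complex.exp (Complex.I * ((∑ i, (A i).indicator (fun _ => c i) x : ℝ) : ℂ))
            - Complex.I * ((∑ i, (A i).indicator (fun _ => c i) x : ℝ) : ℂ) - 1) ∂μ) := by
  classical
  set F : Fin n → ℝ≥0∞ → ℂ := fun i x => Complex.exp (Complex.I * ((c i * x.toReal : ℝ) : ℂ)
    - Complex.I * ((c i * (μ (A i)).toReal : ℝ) : ℂ)) with hFdef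
  set Y : Fin n → Ω → ℂ := fun i => F i ∘ (fun ω => Q ω (A i)) with hYdef
  have hae : ∀ᵐ ω ∂P, ∀ i, Q ω (A i) < ⊤ :=
    (ae_all_iff).2 fun i => ae_lt_top_measure_apply hQ (hA i) (hfin i)
  have hint_eq : ∀ᵐ ω ∂P, Complex.exp (Complex.I
      * ((compensatedIntegral Q μ (fun x => ∑ i, (A i).indicator (fun _ => c i) x) ω : ℝ) : ℂ))
      = ∏ i, Y i ω := by
    filter_upwards [hae] with ω hω
    have hQint : ∫ x, (∑ i, (A i).indicator (fun _ => c i) x) ∂(Q ω)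
        = ∑ i, (Q ω (A i)).toReal * c i := by
      rw [integral_finset_sum _ fun i _ => (integrable_indicator_iff (hA i)).2
        (integrableOn_const (hω i).ne)]
      exact Finset.sum_congr rfl fun i _ => by
        rw [integral_indicator_const (c i) (hA i), smul_eq_mul, measureReal_def]
    have hμint : ∫ x, (∑ i, (A i).indicator (fun _ => c i) x) ∂μ
        = ∑ i, (μ (A i)).toReal * c i := by
      rw [integral_finset_sum _ fun i _ => (integrable_indicator_iff (hA i)).2
        (integrableOn_const (hfin i).ne)]
      exact Finset.sum_congr rfl fun i _ => by
        rw [integral_indicator_const (c i) (hA i), smul_eq_mul, measureReal_def]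
    have hcompensatedIntegral : compensatedIntegral Q μ (fun x => ∑ i, (A i).indicator (fun _ => c i) x) ω
        = ∑ i, ((Q ω (A i)).toReal * c i - (μ (A i)).toReal * c i) := by
      rw [compensatedIntegral, hQint, hμint, Finset.sum_sub_distrib]
    rw [hcompensatedIntegral]
    push_cast
    rw [Finset.mul_sum, Complex.exp_sum]
    exact Finset.prod_congr rfl fun i _ => by
      rw [hYdef, hFdef]
      simp only [Function.comp_apply]
      push_cast
      congr 1
      ring
  rw [integral_congr_ae hint_eq]
  have hYm : ∀ i, Measurable (Y i) := by
    intro i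
    apply Measurable.comp _ (hQ.1 (A i) (hA i) (hfin i)).1
    apply Complex.measurable_exp.comp
    exact ((Complex.measurable_ofReal.comp
      (ENNReal.measurable_toReal.const_mul (c i))).const_mul Complex.I).sub measurable_const
  have hYb : ∀ i ω, ‖Y i ω‖ ≤ 1 := by
    intro i ω
    apply le_of_eq
    simp only [hYdef, hFdef, Function.comp_apply, Complex.norm_exp,
      Complex.sub_re, Complex.mul_re, Complex.I_re, Complex.I_im, Complex.ofReal_re,
      Complex.ofReal_im]
    norm_num
  have hiind : iIndepFun Y P := by
    rw [hYdef]
    exact (hQ.2 n A hA hd).comp _ fun i => by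
      apply Complex.measurable_exp.comp
      exact ((Complex.measurable_ofReal.comp
        (ENNReal.measurable_toReal.const_mul (c i))).const_mul Complex.I).sub measurable_const
  rw [indep_integral_prod hiind hYm hYb Finset.univ]
  have hchar : ∀ i, ∫ ω, Y i ω ∂P = Complex.exp (((μ (A i)).toReal : ℂ)
      * (Complex.exp (Complex.I * (c i : ℂ)) - Complex.I * (c i : ℂ) - 1)) := fun i =>
    char_single hQ (hA i) (hfin i) (c i)
  rw [Finset.prod_congr rfl fun i _ => hchar i, ← Complex.exp_sum]
  congr 1
  have hφ0 : Complex.exp (Complex.I * ((0 : ℝ) : ℂ)) - Complex.I * ((0 : ℝ) : ℂ) - 1 = 0 := by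
    simp
  have hRHS : ∫ x, (Complex.exp (Complex.I * ((∑ i, (A i).indicator (fun _ => c i) x : ℝ) : ℂ))
      - Complex.I * ((∑ i, (A i).indicator (fun _ => c i) x : ℝ) : ℂ) - 1) ∂μ
      = ∑ i, (μ (A i)).toReal • (Complex.exp (Complex.I * (c i : ℂ))
          - Complex.I * (c i : ℂ) - 1) := by
    have hptw : ∀ x, Complex.exp (Complex.I * ((∑ i, (A i).indicator (fun _ => c i) x : ℝ) : ℂ))
        - Complex.I * ((∑ i, (A i).indicator (fun _ => c i) x : ℝ) : ℂ) - 1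
        = ∑ i, (A i).indicator (fun _ => Complex.exp (Complex.I * (c i : ℂ))
            - Complex.I * (c i : ℂ) - 1) x :=
      indicator_comp A hd c (fun r => Complex.exp (Complex.I * (r : ℂ))
        - Complex.I * (r : ℂ) - 1) hφ0
    rw [integral_congr_ae (Filter.Eventually.of_forall hptw),
      integral_finset_sum _ fun i _ => (integrable_indicator_iff (hA i)).2
        (integrableOn_const (hfin i).ne)]
    exact Finset.sum_congr rfl fun i _ => integral_indicator_const _ (hA i)
  rw [hRHS]
  exact Finset.sum_congr rfl fun i _ => Complex.real_smul.symm

end Simple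

section Bridge
variable {Ω E : Type*} [MeasurableSpace Ω] [MeasurableSpace E]
variable {P : Measure Ω} {Q : Ω → Measure E} {μ : Measure E}

set_option maxHeartbeats 2000000 in
lemma char_simplefunc [IsProbabilityMeasure P] [SigmaFinite μ] (hQ : IsPoissonRandomMeasure P Q μ)
    (s : SimpleFunc E ℝ) (hs : Integrable ⇑s μ) :
    ∫ ω, Complex.exp (Complex.I * ((compensatedIntegral Q μ ⇑s ω : ℝ) : ℂ)) ∂P
      = Complex.exp (∫ x, (Complex.exp (Complex.I * ((s x : ℝ) : ℂ))
          - Complex.I * ((s x : ℝ) : ℂ) - 1) ∂μ) := by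
  classical
  set T : Finset ℝ := s.range.erase 0 with hT
  set n := T.card with hn
  set e : Fin n ≃ {x // x ∈ T} := T.equivFin.symm with he
  set c : Fin n → ℝ := fun i => (e i : ℝ) with hc
  set A : Fin n → Set E := fun i => ⇑s ⁻¹' {c i} with hAdef
  have hA : ∀ i, MeasurableSet (A i) := fun i => s.measurableSet_fiber _
  have hcne : ∀ i, c i ≠ 0 := fun i => Finset.ne_of_mem_erase (e i).2
  have hcinj : ∀ i j, c i = c j → i = j := by
    intro i j hij
    exact e.injective (Subtype.ext hij)
  have hd : Pairwise fun i j => Disjoint (A i) (A j) := by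
    intro i j hij
    rw [hAdef, Set.disjoint_left]
    rintro x h1 h2
    exact hij (hcinj i j ((Set.mem_preimage.1 h1).symm.trans (Set.mem_preimage.1 h2)))
  have hfin : ∀ i, μ (A i) < ⊤ := fun i =>
    SimpleFunc.measure_preimage_lt_top_of_integrable s hs (hcne i)
  have hfeq : ∀ x, ∑ i, (A i).indicator (fun _ => c i) x = s x := by
    intro x
    by_cases h0 : s x = 0
    · rw [Finset.sum_eq_zero, h0]
      intro i _
      exact Set.indicator_of_notMem
        (fun hxi => hcne i
          ((Set.mem_singleton_iff.1 (Set.mem_preimage.1 hxi)).symm.trans h0)) _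
    · have hmem : s x ∈ T := Finset.mem_erase.2 ⟨h0, SimpleFunc.mem_range_self s x⟩
      set i0 := e.symm ⟨s x, hmem⟩ with hi0
      have hci0 : c i0 = s x := congrArg Subtype.val (e.apply_symm_apply ⟨s x, hmem⟩)
      rw [Finset.sum_eq_single i0]
      · rw [Set.indicator_of_mem (Set.mem_preimage.2 (Set.mem_singleton_iff.2 hci0.symm)), hci0]
      · intro j _ hj
        apply Set.indicator_of_notMem
        intro hxj
        apply hj
        have hcj : c j = s x := (Set.mem_singleton_iff.1 (Set.mem_preimage.1 hxj)).symm
        have hej : e j = ⟨s x, hmem⟩ := Subtype.ext hcj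
        exact e.injective (by rw [hej, hi0, Equiv.apply_symm_apply])
      · exact fun h => absurd (Finset.mem_univ i0) h
  have hfun : (fun x => ∑ i, (A i).indicator (fun _ => c i) x) = ⇑s := funext hfeq
  have h := char_simple hQ hA hd hfin c
  rw [hfun] at h
  simp only [hfeq] at h
  exact h

end Bridge

section Limit
variable {Ω E : Type*} [MeasurableSpace Ω] [MeasurableSpace E]
variable {P : Measure Ω} {Q : Ω → Measure E} {μ : Measure E}

lemma ae_integrable_Q [IsProbabilityMeasure P] [SigmaFinite μ] (hQ : IsPoissonRandomMeasure P Q μ) {f : E → ℝ}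
    (hfm : Measurable f) (hf : Integrable f μ) : ∀ᵐ ω ∂P, Integrable f (Q ω) := by
  have h1 : ∫⁻ ω, ∫⁻ x, (‖f x‖₊ : ℝ≥0∞) ∂(Q ω) ∂P = ∫⁻ x, (‖f x‖₊ : ℝ≥0∞) ∂μ :=
    campbell hQ hfm.enorm
  have h2 : ∀ᵐ ω ∂P, ∫⁻ x, (‖f x‖₊ : ℝ≥0∞) ∂(Q ω) < ⊤ :=
    ae_lt_top (measurable_lintegral_Q hQ hfm.enorm) (by rw [h1]; exact hf.2.ne)
  filter_upwards [h2] with ω hω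
  exact ⟨hfm.aestronglyMeasurable, hω⟩

lemma aesm_compensatedIntegral [IsProbabilityMeasure P] [SigmaFinite μ] (hQ : IsPoissonRandomMeasure P Q μ) {f : E → ℝ}
    (hfm : Measurable f) (hf : Integrable f μ) :
    AEStronglyMeasurable (fun ω => compensatedIntegral Q μ f ω) P := by
  have hg : Measurable (fun ω => (∫⁻ x, ENNReal.ofReal (f x) ∂(Q ω)).toReal
      - (∫⁻ x, ENNReal.ofReal (-(f x)) ∂(Q ω)).toReal) :=
    (ENNReal.measurable_toReal.comp (measurable_lintegral_Q hQ hfm.ennreal_ofReal)).sub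
      (ENNReal.measurable_toReal.comp (measurable_lintegral_Q hQ hfm.neg.ennreal_ofReal))
  have h1 : AEStronglyMeasurable (fun ω => ∫ x, f x ∂(Q ω)) P := by
    refine ⟨_, hg.stronglyMeasurable, ?_⟩
    filter_upwards [ae_integrable_Q hQ hfm hf] with ω hω
    exact integral_eq_lintegral_pos_part_sub_lintegral_neg_part hω
  exact h1.sub aestronglyMeasurable_const

lemma integrable_exp_compensatedIntegral [IsProbabilityMeasure P] [SigmaFinite μ] (hQ : IsPoissonRandomMeasure P Q μ) {f : E → ℝ}
    (hfm : Measurable f) (hf : Integrable f μ) :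
    Integrable (fun ω => Complex.exp (Complex.I * ((compensatedIntegral Q μ f ω : ℝ) : ℂ))) P := by
  refine Integrable.mono' (integrable_const 1) ?_ (Filter.Eventually.of_forall fun ω =>
    le_of_eq (norm_exp_I_mul _))
  exact Complex.continuous_exp.comp_aestronglyMeasurable
    ((Complex.continuous_ofReal.comp_aestronglyMeasurable (aesm_compensatedIntegral hQ hfm hf)).const_mul
      Complex.I)

lemma char_diff_bound [IsProbabilityMeasure P] [SigmaFinite μ] (hQ : IsPoissonRandomMeasure P Q μ)
    {g h : E → ℝ} (hgm : Measurable g) (hhm : Measurable h)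
    (hg : Integrable g μ) (hh : Integrable h μ) :
    ‖(∫ ω, Complex.exp (Complex.I * ((compensatedIntegral Q μ g ω : ℝ) : ℂ)) ∂P)
        - ∫ ω, Complex.exp (Complex.I * ((compensatedIntegral Q μ h ω : ℝ) : ℂ)) ∂P‖
      ≤ 2 * (∫⁻ x, (‖g x - h x‖₊ : ℝ≥0∞) ∂μ).toReal := by
  have hsubm : Measurable fun x => g x - h x := hgm.sub hhm
  have hsub : Integrable (fun x => g x - h x) μ := hg.sub hh
  have hDμ : ∫⁻ x, (‖g x - h x‖₊ : ℝ≥0∞) ∂μ ≠ ⊤ := hsub.2.ne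
  rw [← integral_sub (integrable_exp_compensatedIntegral hQ hgm hg) (integrable_exp_compensatedIntegral hQ hhm hh)]
  refine le_trans (norm_integral_le_lintegral_norm _) ?_
  have key : ∫⁻ ω, ENNReal.ofReal ‖Complex.exp (Complex.I * ((compensatedIntegral Q μ g ω : ℝ) : ℂ))
        - Complex.exp (Complex.I * ((compensatedIntegral Q μ h ω : ℝ) : ℂ))‖ ∂P
      ≤ 2 * ∫⁻ x, (‖g x - h x‖₊ : ℝ≥0∞) ∂μ := by
    have hptw : ∀ᵐ ω ∂P, ENNReal.ofReal ‖Complex.exp (Complex.I * ((compensatedIntegral Q μ g ω : ℝ) : ℂ))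
        - Complex.exp (Complex.I * ((compensatedIntegral Q μ h ω : ℝ) : ℂ))‖
        ≤ (∫⁻ x, (‖g x - h x‖₊ : ℝ≥0∞) ∂(Q ω)) + ∫⁻ x, (‖g x - h x‖₊ : ℝ≥0∞) ∂μ := by
      filter_upwards [ae_integrable_Q hQ hgm hg, ae_integrable_Q hQ hhm hh] with ω hgω hhω
      have h1 : ‖Complex.exp (Complex.I * ((compensatedIntegral Q μ g ω : ℝ) : ℂ))
          - Complex.exp (Complex.I * ((compensatedIntegral Q μ h ω : ℝ) : ℂ))‖
          ≤ |compensatedIntegral Q μ g ω - compensatedIntegral Q μ h ω| := norm_exp_I_mul_sub_exp_I_mul _ _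
      have h2 : compensatedIntegral Q μ g ω - compensatedIntegral Q μ h ω
          = (∫ x, (g x - h x) ∂(Q ω)) - ∫ x, (g x - h x) ∂μ := by
        simp only [compensatedIntegral]
        rw [integral_sub hgω hhω, integral_sub hg hh]
        ring
      have h3 : |compensatedIntegral Q μ g ω - compensatedIntegral Q μ h ω|
          ≤ |∫ x, (g x - h x) ∂(Q ω)| + |∫ x, (g x - h x) ∂μ| := by
        rw [h2]
        exact abs_sub _ _
      calc ENNReal.ofReal ‖Complex.exp (Complex.I * ((compensatedIntegral Q μ g ω : ℝ) : ℂ))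
            - Complex.exp (Complex.I * ((compensatedIntegral Q μ h ω : ℝ) : ℂ))‖
          ≤ ENNReal.ofReal (|∫ x, (g x - h x) ∂(Q ω)| + |∫ x, (g x - h x) ∂μ|) :=
            ENNReal.ofReal_le_ofReal (h1.trans h3)
        _ ≤ ENNReal.ofReal |∫ x, (g x - h x) ∂(Q ω)| + ENNReal.ofReal |∫ x, (g x - h x) ∂μ| :=
            ENNReal.ofReal_add_le
        _ ≤ (∫⁻ x, (‖g x - h x‖₊ : ℝ≥0∞) ∂(Q ω)) + ∫⁻ x, (‖g x - h x‖₊ : ℝ≥0∞) ∂μ := by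
            refine add_le_add ?_ ?_
            · rw [← Real.enorm_eq_ofReal_abs]
              exact enorm_integral_le_lintegral_enorm _
            · rw [← Real.enorm_eq_ofReal_abs]
              exact enorm_integral_le_lintegral_enorm _
    calc ∫⁻ ω, ENNReal.ofReal ‖Complex.exp (Complex.I * ((compensatedIntegral Q μ g ω : ℝ) : ℂ))
          - Complex.exp (Complex.I * ((compensatedIntegral Q μ h ω : ℝ) : ℂ))‖ ∂P
        ≤ ∫⁻ ω, ((∫⁻ x, (‖g x - h x‖₊ : ℝ≥0∞) ∂(Q ω))
            + ∫⁻ x, (‖g x - h x‖₊ : ℝ≥0∞) ∂μ) ∂P := lintegral_mono_ae hptw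
      _ = (∫⁻ x, (‖g x - h x‖₊ : ℝ≥0∞) ∂μ) + ∫⁻ x, (‖g x - h x‖₊ : ℝ≥0∞) ∂μ := by
          rw [lintegral_add_right _ measurable_const, campbell hQ (g := fun x => (‖g x - h x‖₊ : ℝ≥0∞)) hsubm.enorm,
            lintegral_const, measure_univ, mul_one]
      _ = 2 * ∫⁻ x, (‖g x - h x‖₊ : ℝ≥0∞) ∂μ := (two_mul _).symm
  calc (∫⁻ ω, ENNReal.ofReal ‖Complex.exp (Complex.I * ((compensatedIntegral Q μ g ω : ℝ) : ℂ))
        - Complex.exp (Complex.I * ((compensatedIntegral Q μ h ω : ℝ) : ℂ))‖ ∂P).toReal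
      ≤ (2 * ∫⁻ x, (‖g x - h x‖₊ : ℝ≥0∞) ∂μ).toReal :=
        ENNReal.toReal_mono (ENNReal.mul_ne_top (by simp) hDμ) key
    _ = 2 * (∫⁻ x, (‖g x - h x‖₊ : ℝ≥0∞) ∂μ).toReal := by
        rw [ENNReal.toReal_mul, ENNReal.toReal_ofNat]

lemma phi_continuous : Continuous fun r : ℝ =>
    Complex.exp (Complex.I * (r : ℂ)) - Complex.I * (r : ℂ) - 1 := by
  have h1 : Continuous fun r : ℝ => Complex.I * (r : ℂ) :=
    continuous_const.mul Complex.continuous_ofReal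
  exact ((Complex.continuous_exp.comp h1).sub h1).sub continuous_const

lemma integrable_phi {g : E → ℝ} (hg : Integrable g μ) :
    Integrable (fun x => Complex.exp (Complex.I * ((g x : ℝ) : ℂ))
      - Complex.I * ((g x : ℝ) : ℂ) - 1) μ := by
  refine Integrable.mono' (hg.norm.const_mul 2)
    (phi_continuous.comp_aestronglyMeasurable hg.1) ?_
  exact Filter.Eventually.of_forall fun x => by
    simpa [Real.norm_eq_abs] using norm_phi (g x)

lemma R_diff_bound {g h : E → ℝ} (hg : Integrable g μ) (hh : Integrable h μ) :
    ‖(∫ x, (Complex.exp (Complex.I * ((g x : ℝ) : ℂ)) - Complex.I * ((g x : ℝ) : ℂ) - 1) ∂μ)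
        - ∫ x, (Complex.exp (Complex.I * ((h x : ℝ) : ℂ)) - Complex.I * ((h x : ℝ) : ℂ) - 1) ∂μ‖
      ≤ 2 * (∫⁻ x, (‖g x - h x‖₊ : ℝ≥0∞) ∂μ).toReal := by
  have hDμ : ∫⁻ x, (‖g x - h x‖₊ : ℝ≥0∞) ∂μ ≠ ⊤ := (hg.sub hh).2.ne
  rw [← integral_sub (integrable_phi hg) (integrable_phi hh)]
  refine le_trans (norm_integral_le_lintegral_norm _) ?_
  have key : ∫⁻ x, ENNReal.ofReal ‖(Complex.exp (Complex.I * ((g x : ℝ) : ℂ))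
        - Complex.I * ((g x : ℝ) : ℂ) - 1)
        - (Complex.exp (Complex.I * ((h x : ℝ) : ℂ)) - Complex.I * ((h x : ℝ) : ℂ) - 1)‖ ∂μ
      ≤ 2 * ∫⁻ x, (‖g x - h x‖₊ : ℝ≥0∞) ∂μ := by
    rw [← lintegral_const_mul' 2 _ (by simp)]
    refine lintegral_mono fun x => ?_
    calc ENNReal.ofReal ‖(Complex.exp (Complex.I * ((g x : ℝ) : ℂ))
          - Complex.I * ((g x : ℝ) : ℂ) - 1)
          - (Complex.exp (Complex.I * ((h x : ℝ) : ℂ)) - Complex.I * ((h x : ℝ) : ℂ) - 1)‖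
        ≤ ENNReal.ofReal (2 * |g x - h x|) := ENNReal.ofReal_le_ofReal (norm_phi_sub_phi _ _)
      _ = 2 * (‖g x - h x‖₊ : ℝ≥0∞) := by
          rw [ENNReal.ofReal_mul (by norm_num), ← enorm_eq_nnnorm, Real.enorm_eq_ofReal_abs]
          norm_num
  calc (∫⁻ x, ENNReal.ofReal ‖(Complex.exp (Complex.I * ((g x : ℝ) : ℂ))
        - Complex.I * ((g x : ℝ) : ℂ) - 1)
        - (Complex.exp (Complex.I * ((h x : ℝ) : ℂ)) - Complex.I * ((h x : ℝ) : ℂ) - 1)‖ ∂μ).toReal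
      ≤ (2 * ∫⁻ x, (‖g x - h x‖₊ : ℝ≥0∞) ∂μ).toReal :=
        ENNReal.toReal_mono (ENNReal.mul_ne_top (by simp) hDμ) key
    _ = 2 * (∫⁻ x, (‖g x - h x‖₊ : ℝ≥0∞) ∂μ).toReal := by
        rw [ENNReal.toReal_mul, ENNReal.toReal_ofNat]

end Limit


end PoissonAux

open PoissonAux in
/-- **Characteristic function of a compensated Poisson integral.** If `Q` is a Poisson
random measure with mean measure `μ` and `f ∈ L¹(μ)`, then
`E[exp(i Q̄(f))] = exp(μ(e^{if} − i f − 1))`. -/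
theorem compensated_poisson_char_fun {Ω E : Type*} [MeasurableSpace Ω] [MeasurableSpace E]
    (P : Measure Ω) [IsProbabilityMeasure P] (Q : Ω → Measure E) (μ : Measure E)
    [SigmaFinite μ] (hQ : IsPoissonRandomMeasure P Q μ) (f : E → ℝ)
    (hf1 : Integrable f μ) :
    ∫ ω, Complex.exp (Complex.I * (compensatedIntegral Q μ f ω : ℂ)) ∂P
      = Complex.exp (∫ x, (Complex.exp (Complex.I * (f x : ℂ)) - Complex.I * (f x : ℂ) - 1) ∂μ) := by
  obtain ⟨f', hf'sm, hff'⟩ := hf1.1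
  have hf'm : Measurable f' := hf'sm.measurable
  have hf'int : Integrable f' μ := hf1.congr hff'
  obtain ⟨N, hNsub, hNm, hNz⟩ := exists_measurable_superset_of_null (ae_iff.1 hff')
  have hQN : ∀ᵐ ω ∂P, Q ω N = 0 := by
    have h0 : ∫⁻ ω, Q ω N ∂P = 0 := by rw [lintegral_measure_apply hQ hNm, hNz]
    have := (lintegral_eq_zero_iff (measurable_measure_apply hQ hNm)).1 h0
    filter_upwards [this] with ω hω
    exact hω
  have hLHSeq : ∀ᵐ ω ∂P, Complex.exp (Complex.I * (compensatedIntegral Q μ f ω : ℂ))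
      = Complex.exp (Complex.I * (compensatedIntegral Q μ f' ω : ℂ)) := by
    filter_upwards [hQN] with ω hω
    have h1 : f =ᵐ[Q ω] f' := by
      refine ae_iff.2 (measure_mono_null ?_ hω)
      exact fun x hx => hNsub hx
    have h2 : ∫ x, f x ∂(Q ω) = ∫ x, f' x ∂(Q ω) := integral_congr_ae h1
    have h3 : ∫ x, f x ∂μ = ∫ x, f' x ∂μ := integral_congr_ae hff'
    simp only [compensatedIntegral, h2, h3]
  have hRHSeq : ∫ x, (Complex.exp (Complex.I * (f x : ℂ)) - Complex.I * (f x : ℂ) - 1) ∂μ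
      = ∫ x, (Complex.exp (Complex.I * (f' x : ℂ)) - Complex.I * (f' x : ℂ) - 1) ∂μ := by
    refine integral_congr_ae ?_
    filter_upwards [hff'] with x hx
    rw [hx]
  rw [integral_congr_ae hLHSeq, hRHSeq]
  -- approximation by simple functions
  have hsint : ∀ n, Integrable
      ⇑(SimpleFunc.approxOn f' hf'm (Set.range f' ∪ {0}) 0 (by simp) n) μ := fun n =>
    SimpleFunc.integrable_approxOn_range hf'm hf'int n
  have hD : Filter.Tendsto (fun n => ∫⁻ x,
      (‖SimpleFunc.approxOn f' hf'm (Set.range f' ∪ {0}) 0 (by simp) n x - f' x‖₊ : ℝ≥0∞) ∂μ)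
      Filter.atTop (nhds 0) :=
    SimpleFunc.tendsto_approxOn_range_L1_enorm hf'm hf'int
  have hDr : Filter.Tendsto (fun n => 2 * (∫⁻ x,
      (‖SimpleFunc.approxOn f' hf'm (Set.range f' ∪ {0}) 0 (by simp) n x - f' x‖₊ : ℝ≥0∞)
        ∂μ).toReal) Filter.atTop (nhds 0) := by
    have h1 := (ENNReal.tendsto_toReal (by simp : (0 : ℝ≥0∞) ≠ ⊤)).comp hD
    have h2 := h1.const_mul (2 : ℝ)
    simpa using h2
  have hLlim : Filter.Tendsto (fun n => ∫ ω, Complex.exp (Complex.I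
      * ((compensatedIntegral Q μ (⇑(SimpleFunc.approxOn f' hf'm (Set.range f' ∪ {0}) 0 (by simp) n)) ω : ℝ) : ℂ)) ∂P)
      Filter.atTop (nhds (∫ ω, Complex.exp (Complex.I * ((compensatedIntegral Q μ f' ω : ℝ) : ℂ)) ∂P)) := by
    rw [tendsto_iff_norm_sub_tendsto_zero]
    exact squeeze_zero (fun n => norm_nonneg _)
      (fun n => char_diff_bound hQ (SimpleFunc.measurable _) hf'm (hsint n) hf'int) hDr
  have hRlim : Filter.Tendsto (fun n => ∫ x, (Complex.exp (Complex.I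
      * ((SimpleFunc.approxOn f' hf'm (Set.range f' ∪ {0}) 0 (by simp) n x : ℝ) : ℂ))
      - Complex.I * ((SimpleFunc.approxOn f' hf'm (Set.range f' ∪ {0}) 0 (by simp) n x : ℝ) : ℂ)
      - 1) ∂μ) Filter.atTop
      (nhds (∫ x, (Complex.exp (Complex.I * ((f' x : ℝ) : ℂ))
        - Complex.I * ((f' x : ℝ) : ℂ) - 1) ∂μ)) := by
    rw [tendsto_iff_norm_sub_tendsto_zero]
    exact squeeze_zero (fun n => norm_nonneg _) (fun n => R_diff_bound (hsint n) hf'int) hDr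
  have hexp := (Complex.continuous_exp.tendsto _).comp hRlim
  have heach : ∀ n, ∫ ω, Complex.exp (Complex.I
      * ((compensatedIntegral Q μ (⇑(SimpleFunc.approxOn f' hf'm (Set.range f' ∪ {0}) 0 (by simp) n)) ω : ℝ) : ℂ)) ∂P
      = Complex.exp (∫ x, (Complex.exp (Complex.I
        * ((SimpleFunc.approxOn f' hf'm (Set.range f' ∪ {0}) 0 (by simp) n x : ℝ) : ℂ))
      - Complex.I * ((SimpleFunc.approxOn f' hf'm (Set.range f' ∪ {0}) 0 (by simp) n x : ℝ) : ℂ)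
      - 1) ∂μ) := fun n => char_simplefunc hQ _ (hsint n)
  refine tendsto_nhds_unique hLlim ?_
  have : (fun n => ∫ ω, Complex.exp (Complex.I
      * ((compensatedIntegral Q μ (⇑(SimpleFunc.approxOn f' hf'm (Set.range f' ∪ {0}) 0 (by simp) n)) ω : ℝ) : ℂ)) ∂P)
      = fun n => Complex.exp (∫ x, (Complex.exp (Complex.I
        * ((SimpleFunc.approxOn f' hf'm (Set.range f' ∪ {0}) 0 (by simp) n x : ℝ) : ℂ))
      - Complex.I * ((SimpleFunc.approxOn f' hf'm (Set.range f' ∪ {0}) 0 (by simp) n x : ℝ) : ℂ)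
      - 1) ∂μ) := funext heach
  rw [this]
  exact hexp
end

section
/- Let F : [0,∞) → [0,1] be nondecreasing, let C₀ > 0, L̄ ≥ 0, and suppose b̄ is measurable with sup_{0<t<T} b̄(t) ≤ C₀ and sup_{0<t<T} M₁(t) ≤ C₀, where M₁ solves M₁(t) = (1 − F(t)) + ∫₀ᵗ L̄ M₁(t−r) b̄(r) dr. Then there is a constant C (depending on T, C₀, L̄) such that for all 0 < s < t ≤ T, |M₁(t) − M₁(s)| ≤ C·((F(t) − F(s)) + (t − s)). -/
open MeasureTheory

open intervalIntegral Set

lemma helper_mono_Ioo {f g : ℝ → ℝ} {α β : ℝ} (hαβ : α ≤ β)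
    (hf : IntegrableOn f (Ioc α β)) (hg : IntegrableOn g (Ioc α β))
    (h : ∀ x ∈ Ioo α β, f x ≤ g x) :
    ∫ x in α..β, f x ≤ ∫ x in α..β, g x := by
  rw [intervalIntegral.integral_of_le hαβ, intervalIntegral.integral_of_le hαβ,
    ← setIntegral_congr_set Ioo_ae_eq_Ioc (f := f), ← setIntegral_congr_set Ioo_ae_eq_Ioc (f := g)]
  exact setIntegral_mono_on (hf.mono_set Ioo_subset_Ioc_self) (hg.mono_set Ioo_subset_Ioc_self)
    measurableSet_Ioo h

lemma helper_integrableOn_of_bounded {f : ℝ → ℝ} {α β C : ℝ}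
    (hf : Measurable f) (h : ∀ x ∈ Ioo α β, |f x| ≤ C) :
    IntegrableOn f (Ioc α β) := by
  rcases le_or_gt β α with hba | hab
  · rw [Ioc_eq_empty (by exact not_lt.mpr hba)]; simp
  have : IntegrableOn f (Ioo α β) := by
    apply Integrable.mono' (g := fun _ => C) ((integrableOn_const_iff).mpr (Or.inr (by simp)))
      hf.aestronglyMeasurable.restrict
    filter_upwards [ae_restrict_mem measurableSet_Ioo] with x hx
    exact h x hx
  exact (integrableOn_Ioc_iff_integrableOn_Ioo).mpr this

lemma helper_gronwall {a g : ℝ → ℝ} {S K M : ℝ} (hS : 0 ≤ S) (hK : 0 < K) (hM : 0 ≤ M)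
    (ha_int : IntegrableOn a (Icc 0 S)) (ha_nn : ∀ u ∈ Icc (0:ℝ) S, 0 ≤ a u)
    (hg_int : IntegrableOn g (Icc 0 S)) (hg_nn : ∀ u ∈ Icc (0:ℝ) S, 0 ≤ g u)
    (hgM : ∀ u ∈ Icc (0:ℝ) S, g u ≤ M)
    (hineq : ∀ u ∈ Icc (0:ℝ) S, g u ≤ (∫ v in (0:ℝ)..u, a v) + K * ∫ v in (0:ℝ)..u, g v) :
    ∀ u ∈ Icc (0:ℝ) S, g u ≤ Real.exp (K * u) * ∫ v in (0:ℝ)..u, a v := by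
  -- A is the primitive of a
  set A : ℝ → ℝ := fun u => ∫ v in (0:ℝ)..u, a v with hA
  have ha_int' : ∀ u ∈ Icc (0:ℝ) S, IntegrableOn a (Ioc 0 u) :=
    fun u hu => ha_int.mono_set (Ioc_subset_Icc_self.trans (Icc_subset_Icc le_rfl hu.2))
  have hg_int' : ∀ u ∈ Icc (0:ℝ) S, IntegrableOn g (Ioc 0 u) :=
    fun u hu => hg_int.mono_set (Ioc_subset_Icc_self.trans (Icc_subset_Icc le_rfl hu.2))
  have hA_nn : ∀ u ∈ Icc (0:ℝ) S, 0 ≤ A u := by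
    intro u hu
    rw [hA]
    apply intervalIntegral.integral_nonneg hu.1
    intro v hv; exact ha_nn v ⟨hv.1, hv.2.trans hu.2⟩
  have hA_mono : ∀ u ∈ Icc (0:ℝ) S, ∀ v ∈ Icc (0:ℝ) u, A v ≤ A u := by
    intro u hu v hv
    have h1 : IntervalIntegrable a volume 0 v := by
      rw [intervalIntegrable_iff_integrableOn_Ioc_of_le hv.1]
      exact ha_int' v ⟨hv.1, hv.2.trans hu.2⟩
    have h2 : IntervalIntegrable a volume v u := by
      rw [intervalIntegrable_iff_integrableOn_Ioc_of_le hv.2]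
      exact (ha_int' u hu).mono_set (Ioc_subset_Ioc hv.1 le_rfl)
    show (∫ w in (0:ℝ)..v, a w) ≤ ∫ w in (0:ℝ)..u, a w
    rw [← intervalIntegral.integral_add_adjacent_intervals h1 h2]
    have : 0 ≤ ∫ x in v..u, a x := by
      apply intervalIntegral.integral_nonneg hv.2
      intro w hw; exact ha_nn w ⟨hv.1.trans hw.1, hw.2.trans hu.2⟩
    linarith
  -- main induction
  have key : ∀ n : ℕ, ∀ u ∈ Icc (0:ℝ) S, g u ≤ Real.exp (K * u) * A u + M * (K * u) ^ n / n.factorial := by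
    intro n
    induction n with
    | zero =>
      intro u hu
      simp only [pow_zero, Nat.factorial_zero, Nat.cast_one, mul_one]
      have := hgM u hu
      have := hA_nn u hu
      nlinarith [Real.exp_pos (K * u)]
    | succ n ih =>
      intro u hu
      have hu0 : (0:ℝ) ≤ u := hu.1
      have step := hineq u hu
      -- bound ∫ g by integral of ih bound
      have hgle : (∫ v in (0:ℝ)..u, g v) ≤
          ∫ v in (0:ℝ)..u, (Real.exp (K * v) * A u + M * (K * v) ^ n / n.factorial) := by
        apply helper_mono_Ioo hu0 (hg_int' u hu)
        · apply Integrable.add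
          · exact ((Real.continuous_exp.comp (continuous_const.mul continuous_id)).mul
              continuous_const).integrableOn_Ioc
          · exact ((continuous_const.mul ((continuous_const.mul continuous_id).pow n)).div_const
              _).integrableOn_Ioc
        · intro v hv
          calc g v ≤ Real.exp (K * v) * A v + M * (K * v) ^ n / n.factorial :=
                ih v ⟨hv.1.le, hv.2.le.trans hu.2⟩
            _ ≤ _ := by
                have : A v ≤ A u := hA_mono u hu v ⟨hv.1.le, hv.2.le⟩
                have := Real.exp_pos (K * v)
                nlinarith
      have e1 : (∫ v in (0:ℝ)..u, Real.exp (K * v)) = (Real.exp (K * u) - 1) / K := by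
        have : ∀ v ∈ uIcc (0:ℝ) u, HasDerivAt (fun w => Real.exp (K * w) / K) (Real.exp (K * v)) v := by
          intro v _
          have h1 : HasDerivAt (fun w => K * w) K v := by
            simpa using (hasDerivAt_id v).const_mul K
          have h2 := (Real.hasDerivAt_exp (K * v)).comp v h1
          have h3 := h2.div_const K
          simpa [mul_div_assoc, mul_comm, mul_div_cancel_left₀ _ (ne_of_gt hK)] using h3
        rw [intervalIntegral.integral_eq_sub_of_hasDerivAt this
          ((Real.continuous_exp.comp (continuous_const.mul continuous_id)).intervalIntegrable 0 u)]
        field_simp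
        simp
      have e2 : (∫ v in (0:ℝ)..u, v ^ n) = u ^ (n+1) / (n+1) := by
        simpa using integral_pow (a:=0) (b:=u) n
      have hsplit : (∫ v in (0:ℝ)..u, (Real.exp (K * v) * A u + M * (K * v) ^ n / n.factorial))
          = (Real.exp (K * u) - 1) / K * A u + M * K ^ n * (u ^ (n+1) / (n+1)) / n.factorial := by
        rw [intervalIntegral.integral_add, intervalIntegral.integral_mul_const, e1]
        · congr 1
          have : ∀ v : ℝ, M * (K * v) ^ n / n.factorial = (M * K ^ n / n.factorial) * v ^ n := by
            intro v; rw [mul_pow]; ring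
          simp_rw [this]
          rw [intervalIntegral.integral_const_mul, e2]
          ring
        · exact ((Real.continuous_exp.comp (continuous_const.mul continuous_id)).mul
            continuous_const).intervalIntegrable 0 u
        · exact ((continuous_const.mul ((continuous_const.mul continuous_id).pow n)).div_const
            _).intervalIntegrable 0 u
      rw [hsplit] at hgle
      have hAu := hA_nn u hu
      have hfac : (0:ℝ) < n.factorial := by positivity
      have hrem : K * (M * K ^ n * (u ^ (n+1) / (n+1)) / n.factorial)
          = M * (K * u) ^ (n+1) / (n+1).factorial := by
        rw [Nat.factorial_succ, mul_pow]
        push_cast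
        field_simp
        ring
      have hKA : K * ((Real.exp (K * u) - 1) / K * A u) = (Real.exp (K * u) - 1) * A u := by
        field_simp
      calc g u ≤ A u + K * ∫ v in (0:ℝ)..u, g v := step
        _ ≤ A u + K * ((Real.exp (K * u) - 1) / K * A u
              + M * K ^ n * (u ^ (n+1) / (n+1)) / n.factorial) := by nlinarith
        _ = Real.exp (K * u) * A u + M * (K * u) ^ (n+1) / (n+1).factorial := by
            rw [mul_add, hKA, hrem]; ring
  -- pass to the limit
  intro u hu
  have hlim : Filter.Tendsto (fun n : ℕ => Real.exp (K * u) * A u + M * (K * u) ^ n / n.factorial)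
      Filter.atTop (nhds (Real.exp (K * u) * A u)) := by
    have h1 : Filter.Tendsto (fun n : ℕ => (K * u) ^ n / n.factorial) Filter.atTop (nhds 0) :=
      FloorSemiring.tendsto_pow_div_factorial_atTop (K * u)
    have := ((h1.const_mul M).const_add (Real.exp (K * u) * A u))
    simpa [mul_div_assoc] using this
  exact ge_of_tendsto hlim (Filter.Eventually.of_forall fun n => key n u hu)

set_option maxHeartbeats 1000000

/-- **Increment estimate for the mean of the CMJ process.** If `M₁` solves the renewal
equation `M₁ t = (1 − F t) + ∫₀ᵗ L̄ M₁(t−r) b̄(r) dr`, with `F` nondecreasing `[0,1]`-valued,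
`b̄ ≤ C₀` and `M₁ ≤ C₀` on `(0,T)`, then there is a constant `C` such that for all
`0 < s < t ≤ T`, `|M₁ t − M₁ s| ≤ C ((F t − F s) + (t − s))`. -/
theorem cmj_mean_increment_bound (T C₀ Lbar : ℝ) (hT : 0 < T) (hC₀ : 0 < C₀) (hL : 0 ≤ Lbar)
    (F bbar M₁ : ℝ → ℝ)
    (hF : MonotoneOn F (Set.Ici 0)) (hFrange : ∀ t ≥ (0:ℝ), F t ∈ Set.Icc (0:ℝ) 1)
    (hb : Measurable bbar) (hbnn : ∀ t ≥ (0:ℝ), 0 ≤ bbar t)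
    (hbB : ∀ t ∈ Set.Ioo (0:ℝ) T, bbar t ≤ C₀)
    (hM : Measurable M₁) (hMB : ∀ t ∈ Set.Ioo (0:ℝ) T, M₁ t ≤ C₀)
    (hMnn : ∀ t ≥ (0:ℝ), 0 ≤ M₁ t)
    (heq : ∀ t ≥ (0:ℝ), M₁ t = (1 - F t) + ∫ r in (0:ℝ)..t, Lbar * M₁ (t - r) * bbar r) :
    ∃ C > (0:ℝ), ∀ s t : ℝ, 0 < s → s < t → t ≤ T →
      |M₁ t - M₁ s| ≤ C * ((F t - F s) + (t - s)) := by
  set D : ℝ := Lbar * C₀ ^ 2 with hD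
  set K : ℝ := Lbar * C₀ + 1 with hK
  have hD0 : 0 ≤ D := by positivity
  have hK0 : 0 < K := by positivity
  set C : ℝ := 1 + D + K * Real.exp (K * T) * (1 + D * T) with hCdef
  have hC0 : 0 < C := by positivity
  refine ⟨C, hC0, ?_⟩
  intro s t hs hst htT
  set δ : ℝ := t - s with hδdef
  have hδ : 0 < δ := by simp only [hδdef]; linarith
  have hsT : s < T := lt_of_lt_of_le hst htT
  -- the monotone extension of F
  set Fm : ℝ → ℝ := fun x => F (max x 0) with hFmdef
  have hFm_mono : Monotone Fm := by
    intro x y hxy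
    exact hF (le_max_right x 0) (le_max_right y 0) (max_le_max hxy le_rfl)
  have hFm01 : ∀ x : ℝ, 0 ≤ Fm x ∧ Fm x ≤ 1 := by
    intro x
    have := hFrange (max x 0) (le_max_right x 0)
    exact ⟨this.1, this.2⟩
  have hFme : ∀ x : ℝ, 0 ≤ x → Fm x = F x := by
    intro x hx; simp only [hFmdef, max_eq_left hx]
  -- basic objects
  set φ : ℝ → ℝ := fun u => M₁ (δ + u) - M₁ u with hφdef
  set g : ℝ → ℝ := fun u => ∫ v in (0:ℝ)..u, |φ v| with hgdef
  set a : ℝ → ℝ := fun u => (Fm (δ + u) - Fm u) + D * δ with hadef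
  have hφ_meas : Measurable φ := (hM.comp (measurable_id.const_add δ)).sub hM
  -- bound on the kernel
  have hbound : ∀ τ α β r : ℝ, β ≤ τ → τ ≤ T → 0 ≤ α → r ∈ Set.Ioo α β →
      0 ≤ Lbar * M₁ (τ - r) * bbar r ∧ Lbar * M₁ (τ - r) * bbar r ≤ D := by
    intro τ α β r hβτ hτT hα hr
    have hr0 : 0 < r := lt_of_le_of_lt hα hr.1
    have hrT : r < T := lt_of_lt_of_le (lt_of_lt_of_le hr.2 hβτ) hτT
    have h1 : 0 < τ - r := by nlinarith [hr.2]
    have h2 : τ - r < T := by nlinarith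
    have hM1 := hMB (τ - r) ⟨h1, h2⟩
    have hM2 := hMnn (τ - r) h1.le
    have hb1 := hbB r ⟨hr0, hrT⟩
    have hb2 := hbnn r hr0.le
    refine ⟨by positivity, ?_⟩
    have h3 : M₁ (τ - r) * bbar r ≤ C₀ * C₀ := mul_le_mul hM1 hb1 hb2 hC₀.le
    calc Lbar * M₁ (τ - r) * bbar r = Lbar * (M₁ (τ - r) * bbar r) := by ring
      _ ≤ Lbar * (C₀ * C₀) := mul_le_mul_of_nonneg_left h3 hL
      _ = D := by rw [hD]; ring
  have hkmeas : ∀ τ : ℝ, Measurable (fun r => Lbar * M₁ (τ - r) * bbar r) := fun τ =>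
    ((measurable_const.mul (hM.comp (measurable_const.sub measurable_id))).mul hb)
  have hkint : ∀ τ α β : ℝ, β ≤ τ → τ ≤ T → 0 ≤ α →
      IntegrableOn (fun r => Lbar * M₁ (τ - r) * bbar r) (Set.Ioc α β) := by
    intro τ α β hβτ hτT hα
    apply helper_integrableOn_of_bounded (hkmeas τ) (C := D)
    intro r hr
    have := hbound τ α β r hβτ hτT hα hr
    rw [abs_of_nonneg this.1]; exact this.2
  -- a.e. bound on φ
  have hφb : ∀ v ∈ Set.Ioo (0:ℝ) s, |φ v| ≤ C₀ := by
    intro v hv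
    have h1 : v < T := lt_trans hv.2 hsT
    have h2 : 0 < δ + v := by linarith [hv.1]
    have h3 : δ + v < T := by simp only [hδdef]; linarith [hv.2, htT]
    have ha1 := hMB v ⟨hv.1, h1⟩
    have ha2 := hMnn v hv.1.le
    have ha3 := hMB (δ + v) ⟨h2, h3⟩
    have ha4 := hMnn (δ + v) h2.le
    have : φ v = M₁ (δ + v) - M₁ v := by rw [hφdef]
    rw [this, abs_le]; constructor <;> linarith
  have hφ_int : ∀ u : ℝ, u ≤ s → IntegrableOn (fun v => |φ v|) (Set.Ioc 0 u) := by
    intro u hu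
    apply helper_integrableOn_of_bounded hφ_meas.abs (C := C₀)
    intro v hv
    rw [abs_abs]
    exact hφb v ⟨hv.1, lt_of_lt_of_le hv.2 hu⟩
  have hg_nn : ∀ u : ℝ, 0 ≤ u → 0 ≤ g u := by
    intro u hu
    apply intervalIntegral.integral_nonneg hu
    intro v _; exact abs_nonneg _
  -- key pointwise inequality
  have hφ_pointwise : ∀ u ∈ Set.Icc (0:ℝ) s, |φ u| ≤ a u + K * g u := by
    intro u hu
    set t' : ℝ := δ + u with ht'def
    have ht'0 : (0:ℝ) ≤ t' := by simp only [ht'def]; linarith [hu.1]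
    have hut' : u ≤ t' := by simp only [ht'def]; linarith
    have ht'T : t' ≤ T := by simp only [ht'def, hδdef]; linarith [hu.2]
    have huT : u ≤ T := le_trans hu.2 hsT.le
    have I1 : IntervalIntegrable (fun r => Lbar * M₁ (t' - r) * bbar r) volume 0 u := by
      rw [intervalIntegrable_iff_integrableOn_Ioc_of_le hu.1]
      exact hkint t' 0 u hut' ht'T le_rfl
    have I2 : IntervalIntegrable (fun r => Lbar * M₁ (t' - r) * bbar r) volume u t' := by
      rw [intervalIntegrable_iff_integrableOn_Ioc_of_le hut']
      exact hkint t' u t' le_rfl ht'T hu.1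
    have I3 : IntervalIntegrable (fun r => Lbar * M₁ (u - r) * bbar r) volume 0 u := by
      rw [intervalIntegrable_iff_integrableOn_Ioc_of_le hu.1]
      exact hkint u 0 u le_rfl huT le_rfl
    have hsplit : (∫ r in (0:ℝ)..t', Lbar * M₁ (t' - r) * bbar r)
        = (∫ r in (0:ℝ)..u, Lbar * M₁ (t' - r) * bbar r)
          + ∫ r in u..t', Lbar * M₁ (t' - r) * bbar r :=
      (intervalIntegral.integral_add_adjacent_intervals I1 I2).symm
    have hrepr : φ u = (F u - F t')
        + ((∫ r in (0:ℝ)..u, Lbar * M₁ (t' - r) * bbar r)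
            - ∫ r in (0:ℝ)..u, Lbar * M₁ (u - r) * bbar r)
        + ∫ r in u..t', Lbar * M₁ (t' - r) * bbar r := by
      have e1 := heq t' ht'0
      have e2 := heq u hu.1
      simp only [hφdef, ← ht'def]
      rw [e1, e2, hsplit]; ring
    -- bound the tail integral
    have B1 : |∫ r in u..t', Lbar * M₁ (t' - r) * bbar r| ≤ D * δ := by
      have h1 : (∫ r in u..t', Lbar * M₁ (t' - r) * bbar r) ≤ ∫ _r in u..t', D := by
        apply helper_mono_Ioo hut' (hkint t' u t' le_rfl ht'T hu.1)
          ((integrableOn_const_iff).mpr (Or.inr (by simp)))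
        intro r hr; exact (hbound t' u t' r le_rfl ht'T hu.1 hr).2
      have h2 : (∫ _r in u..t', (0:ℝ)) ≤ ∫ r in u..t', Lbar * M₁ (t' - r) * bbar r := by
        apply helper_mono_Ioo hut' ((integrableOn_const_iff).mpr (Or.inr (by simp)))
          (hkint t' u t' le_rfl ht'T hu.1)
        intro r hr; exact (hbound t' u t' r le_rfl ht'T hu.1 hr).1
      rw [intervalIntegral.integral_const] at h1 h2
      have ht'u : t' - u = δ := by simp only [ht'def]; ring
      rw [abs_le]; constructor
      · simp only [smul_zero] at h2; linarith [mul_nonneg hD0 hδ.le]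
      · rw [ht'u] at h1; simp only [smul_eq_mul] at h1; linarith [h1]
    -- bound the difference integral
    have B2 : |(∫ r in (0:ℝ)..u, Lbar * M₁ (t' - r) * bbar r)
        - ∫ r in (0:ℝ)..u, Lbar * M₁ (u - r) * bbar r| ≤ Lbar * C₀ * g u := by
      rw [← intervalIntegral.integral_sub I1 I3]
      have habs : |∫ r in (0:ℝ)..u, (Lbar * M₁ (t' - r) * bbar r - Lbar * M₁ (u - r) * bbar r)|
          ≤ ∫ r in (0:ℝ)..u, |Lbar * M₁ (t' - r) * bbar r - Lbar * M₁ (u - r) * bbar r| :=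
        intervalIntegral.abs_integral_le_integral_abs hu.1
      have hIdiff : IntegrableOn
          (fun r => |Lbar * M₁ (t' - r) * bbar r - Lbar * M₁ (u - r) * bbar r|) (Set.Ioc 0 u) := by
        rw [intervalIntegrable_iff_integrableOn_Ioc_of_le hu.1] at I1 I3
        exact (I1.sub I3).abs
      have hIphi : IntegrableOn (fun r => Lbar * C₀ * |φ (u - r)|) (Set.Ioc 0 u) := by
        have hm2 : Measurable (fun r : ℝ => Lbar * C₀ * |φ (u - r)|) :=
          measurable_const.mul ((hφ_meas.comp (measurable_const.sub measurable_id)).abs)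
        apply helper_integrableOn_of_bounded hm2 (C := Lbar * C₀ * C₀)
        intro r hr
        have h1 : u - r ∈ Set.Ioo (0:ℝ) s := ⟨by linarith [hr.2], by linarith [hr.1, hu.2]⟩
        have h3 := hφb (u - r) h1
        have h2 : (0:ℝ) ≤ |φ (u - r)| := abs_nonneg _
        rw [abs_of_nonneg (by positivity)]
        nlinarith [mul_le_mul_of_nonneg_left h3 (mul_nonneg hL hC₀.le)]
      have hmono : (∫ r in (0:ℝ)..u, |Lbar * M₁ (t' - r) * bbar r - Lbar * M₁ (u - r) * bbar r|)
          ≤ ∫ r in (0:ℝ)..u, Lbar * C₀ * |φ (u - r)| := by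
        apply helper_mono_Ioo hu.1 hIdiff hIphi
        intro r hr
        have hrT : r < T := lt_of_lt_of_le hr.2 huT
        have hbb := hbB r ⟨hr.1, hrT⟩
        have hbn := hbnn r hr.1.le
        have key : Lbar * M₁ (t' - r) * bbar r - Lbar * M₁ (u - r) * bbar r
            = Lbar * (φ (u - r)) * bbar r := by
          simp only [hφdef, ht'def]
          have : δ + u - r = δ + (u - r) := by ring
          rw [this]; ring
        rw [key, abs_mul, abs_mul, abs_of_nonneg hL, abs_of_nonneg hbn]
        have h2 : (0:ℝ) ≤ |φ (u - r)| := abs_nonneg _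
        nlinarith [mul_le_mul_of_nonneg_left hbb (mul_nonneg hL h2)]
      have hcv : (∫ r in (0:ℝ)..u, Lbar * C₀ * |φ (u - r)|) = Lbar * C₀ * g u := by
        rw [intervalIntegral.integral_const_mul]
        congr 1
        have := intervalIntegral.integral_comp_sub_left (a := (0:ℝ)) (b := u)
          (fun v => |φ v|) u
        simpa using this
      calc |∫ r in (0:ℝ)..u, (Lbar * M₁ (t' - r) * bbar r - Lbar * M₁ (u - r) * bbar r)|
          ≤ ∫ r in (0:ℝ)..u, |Lbar * M₁ (t' - r) * bbar r - Lbar * M₁ (u - r) * bbar r| := habs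
        _ ≤ ∫ r in (0:ℝ)..u, Lbar * C₀ * |φ (u - r)| := hmono
        _ = Lbar * C₀ * g u := hcv
    -- combine
    have hFdiff : F t' - F u = Fm (δ + u) - Fm u := by
      rw [hFme t' ht'0, hFme u hu.1, ht'def]
    have hFmono : F u ≤ F t' := hF hu.1 ht'0 hut'
    have hgnn := hg_nn u hu.1
    calc |φ u| ≤ |F u - F t'|
          + |(∫ r in (0:ℝ)..u, Lbar * M₁ (t' - r) * bbar r)
              - ∫ r in (0:ℝ)..u, Lbar * M₁ (u - r) * bbar r|
          + |∫ r in u..t', Lbar * M₁ (t' - r) * bbar r| := by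
            rw [hrepr]; exact (abs_add_le _ _).trans (by gcongr; exact abs_add_le _ _)
      _ ≤ (F t' - F u) + Lbar * C₀ * g u + D * δ := by
            rw [abs_sub_comm, abs_of_nonneg (by linarith)]
            gcongr
      _ ≤ a u + K * g u := by
            simp only [hadef, ← hFdiff, hK]
            nlinarith
  -- integrability of a and g
  have ha_meas : Measurable a := by
    have hFm_meas : Measurable Fm := hFm_mono.measurable
    exact ((hFm_meas.comp (measurable_id.const_add δ)).sub hFm_meas).add measurable_const
  have ha_bd : ∀ x : ℝ, |a x| ≤ 1 + D * δ := by
    intro x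
    have h1 := hFm01 x
    have h2 := hFm01 (δ + x)
    have h3 : Fm x ≤ Fm (δ + x) := hFm_mono (by linarith)
    rw [abs_le]; constructor <;> simp only [hadef] <;> nlinarith
  have ha_int : IntegrableOn a (Set.Icc 0 s) := by
    apply Integrable.mono' (g := fun _ => 1 + D * δ)
      ((integrableOn_const_iff).mpr (Or.inr (by simp)))
      ha_meas.aestronglyMeasurable.restrict
    exact Filter.Eventually.of_forall fun x => ha_bd x
  have ha_nn : ∀ u ∈ Set.Icc (0:ℝ) s, 0 ≤ a u := by
    intro u hu
    have h3 : Fm u ≤ Fm (δ + u) := hFm_mono (by linarith)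
    simp only [hadef]; nlinarith
  have hg_cont : ContinuousOn g (Set.Icc 0 s) := by
    have := intervalIntegral.continuousOn_primitive (f := fun v => |φ v|) (a := (0:ℝ)) (b := s)
      (μ := volume) (by rw [integrableOn_Icc_iff_integrableOn_Ioc]; exact hφ_int s le_rfl)
    apply this.congr
    intro u hu
    simp only [hgdef]
    rw [intervalIntegral.integral_of_le hu.1]
  have hg_int : IntegrableOn g (Set.Icc 0 s) := hg_cont.integrableOn_Icc
  have hgM : ∀ u ∈ Set.Icc (0:ℝ) s, g u ≤ C₀ * s := by
    intro u hu
    have h1 : g u ≤ ∫ _v in (0:ℝ)..u, C₀ := by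
      apply helper_mono_Ioo hu.1 (hφ_int u hu.2) ((integrableOn_const_iff).mpr (Or.inr (by simp)))
      intro v hv; exact hφb v ⟨hv.1, lt_of_lt_of_le hv.2 hu.2⟩
    rw [intervalIntegral.integral_const, smul_eq_mul, sub_zero] at h1
    nlinarith [hu.1, hu.2]
  have hineq : ∀ u ∈ Set.Icc (0:ℝ) s, g u ≤ (∫ v in (0:ℝ)..u, a v) + K * ∫ v in (0:ℝ)..u, g v := by
    intro u hu
    have haint' : IntegrableOn a (Set.Ioc 0 u) :=
      ha_int.mono_set (Set.Ioc_subset_Icc_self.trans (Set.Icc_subset_Icc le_rfl hu.2))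
    have hgint' : IntegrableOn g (Set.Ioc 0 u) :=
      hg_int.mono_set (Set.Ioc_subset_Icc_self.trans (Set.Icc_subset_Icc le_rfl hu.2))
    have h1 : g u ≤ ∫ v in (0:ℝ)..u, (a v + K * g v) := by
      apply helper_mono_Ioo hu.1 (hφ_int u hu.2)
        (haint'.add (hgint'.const_mul K))
      intro v hv
      exact hφ_pointwise v ⟨hv.1.le, hv.2.le.trans hu.2⟩
    rw [intervalIntegral.integral_add, intervalIntegral.integral_const_mul] at h1
    · exact h1
    · rw [intervalIntegrable_iff_integrableOn_Ioc_of_le hu.1]; exact haint'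
    · rw [intervalIntegrable_iff_integrableOn_Ioc_of_le hu.1]; exact hgint'.const_mul K
  -- apply Gronwall
  have hgs : g s ≤ Real.exp (K * s) * ∫ v in (0:ℝ)..s, a v :=
    helper_gronwall hs.le hK0 (by positivity) ha_int ha_nn hg_int
      (fun u hu => hg_nn u hu.1) hgM hineq s ⟨hs.le, le_rfl⟩
  -- bound ∫ a
  have hFm_ii : ∀ α β : ℝ, IntervalIntegrable Fm volume α β := fun α β =>
    (hFm_mono.monotoneOn _).intervalIntegrable
  have hFm_sh : Monotone (fun v : ℝ => Fm (δ + v)) :=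
    hFm_mono.comp (fun x y hxy => by simpa using add_le_add_left hxy δ)
  have hFm_ii2 : ∀ α β : ℝ, IntervalIntegrable (fun v : ℝ => Fm (δ + v)) volume α β :=
    fun α β => (hFm_sh.monotoneOn _).intervalIntegrable
  have hAs : (∫ v in (0:ℝ)..s, a v) ≤ δ * (1 + D * T) := by
    have e1 : (∫ v in (0:ℝ)..s, a v)
        = (∫ v in (0:ℝ)..s, (Fm (δ + v) - Fm v)) + D * δ * s := by
      simp only [hadef]
      rw [intervalIntegral.integral_add _ (intervalIntegrable_const)]
      · rw [intervalIntegral.integral_const, smul_eq_mul, sub_zero]; ring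
      · exact (hFm_ii2 0 s).sub (hFm_ii 0 s)
    have e2 : (∫ v in (0:ℝ)..s, Fm (δ + v)) = ∫ v in δ..(δ + s), Fm v := by
      simpa using intervalIntegral.integral_comp_add_left (a := (0:ℝ)) (b := s) Fm δ
    have e3 : (∫ v in (0:ℝ)..s, (Fm (δ + v) - Fm v))
        = (∫ v in s..(δ + s), Fm v) - ∫ v in (0:ℝ)..δ, Fm v := by
      rw [intervalIntegral.integral_sub (hFm_ii2 0 s) (hFm_ii 0 s), e2]
      have h4 : (∫ v in δ..(δ + s), Fm v) = (∫ v in (0:ℝ)..(δ+s), Fm v) - ∫ v in (0:ℝ)..δ, Fm v := by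
        rw [← intervalIntegral.integral_interval_sub_left (hFm_ii 0 (δ+s)) (hFm_ii 0 δ)]
      have h5 : (∫ v in s..(δ + s), Fm v) = (∫ v in (0:ℝ)..(δ+s), Fm v) - ∫ v in (0:ℝ)..s, Fm v := by
        rw [← intervalIntegral.integral_interval_sub_left (hFm_ii 0 (δ+s)) (hFm_ii 0 s)]
      rw [h4, h5]; ring
    have h6 : (∫ v in s..(δ + s), Fm v) ≤ δ := by
      have : (∫ v in s..(δ + s), Fm v) ≤ ∫ _v in s..(δ + s), (1:ℝ) := by
        apply intervalIntegral.integral_mono_on (by linarith) (hFm_ii s (δ+s))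
          intervalIntegrable_const
        intro x _; exact (hFm01 x).2
      rw [intervalIntegral.integral_const, smul_eq_mul, mul_one] at this
      linarith
    have h7 : (0:ℝ) ≤ ∫ v in (0:ℝ)..δ, Fm v := by
      apply intervalIntegral.integral_nonneg hδ.le
      intro v _; exact (hFm01 v).1
    rw [e1, e3]
    have hsT' : s ≤ T := hsT.le
    nlinarith [mul_le_mul_of_nonneg_left hsT' (mul_nonneg hD0 hδ.le)]
  -- final assembly
  have hA_nn : (0:ℝ) ≤ ∫ v in (0:ℝ)..s, a v := by
    apply intervalIntegral.integral_nonneg hs.le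
    intro v hv; exact ha_nn v hv
  have hfin := hφ_pointwise s ⟨hs.le, le_rfl⟩
  have hφs : φ s = M₁ t - M₁ s := by
    simp only [hφdef, hδdef]
    congr 2; ring
  rw [← hφs]
  have has : a s = (F t - F s) + D * δ := by
    simp only [hadef]
    rw [show δ + s = t by simp only [hδdef]; ring, hFme t (by linarith), hFme s hs.le]
  have hexp : Real.exp (K * s) ≤ Real.exp (K * T) := by
    apply Real.exp_le_exp.mpr
    nlinarith
  have hexp0 : (0:ℝ) < Real.exp (K * s) := Real.exp_pos _
  have hexpT : (0:ℝ) < Real.exp (K * T) := Real.exp_pos _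
  have hFts : 0 ≤ F t - F s := by
    have := hF (Set.mem_Ici.mpr hs.le) (Set.mem_Ici.mpr (by linarith : (0:ℝ) ≤ t)) hst.le
    linarith
  have hgs' : K * g s ≤ K * (Real.exp (K * T) * (δ * (1 + D * T))) := by
    have h1 : g s ≤ Real.exp (K * T) * (δ * (1 + D * T)) := by
      calc g s ≤ Real.exp (K * s) * ∫ v in (0:ℝ)..s, a v := hgs
        _ ≤ Real.exp (K * T) * (δ * (1 + D * T)) := by
            apply mul_le_mul hexp hAs hA_nn hexpT.le
    nlinarith
  calc |φ s| ≤ a s + K * g s := hfin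
    _ ≤ (F t - F s) + D * δ + K * (Real.exp (K * T) * (δ * (1 + D * T))) := by
        rw [has]; linarith
    _ ≤ C * ((F t - F s) + δ) := by
        simp only [hCdef]
        nlinarith [mul_pos hK0 (mul_pos hexpT (by nlinarith : (0:ℝ) < 1 + D * T))]
    _ = C * ((F t - F s) + (t - s)) := by rw [hδdef]
end
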